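/- If H is obtained from a chain graph G by a feasible split of a component, then H induces the same independence model as G: for all disjoint X, Y, Z, X ⫫_G Y | Z if and only if X ⫫_H Y | Z. -/

import Mathlib

/-- A hybrid graph over a vertex set `V`: it has directed edges (`dir`) and
undirected edges (`undir`, stored as a symmetric irreflexive relation). -/
structure HybridGraph (V : Type) where
  dir : V → V → Prop
  undir : V → V → Prop
  dir_irrefl : ∀ x, ¬ dir x x
  undir_irrefl : ∀ x, ¬ undir x x
  undir_symm : ∀ x y, undir x y → undir y x

namespace HybridGraph

variable {V : Type}

/-- Two nodes are adjacent if joined by a directed or undirected edge. -/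
def adj (G : HybridGraph V) (x y : V) : Prop :=
  G.dir x y ∨ G.dir y x ∨ G.undir x y

/-- One step of a descending route: `x − y` or `x → y`. -/
def descStep (G : HybridGraph V) (x y : V) : Prop := G.dir x y ∨ G.undir x y

/-- `y` is a descendant of `x`: there is a descending route from `x` to `y`
(routes of length zero allowed). -/
def descendant (G : HybridGraph V) : V → V → Prop :=
  Relation.ReflTransGen G.descStep

/-- There is an undirected route between `x` and `y` (length zero allowed). -/
def uconn (G : HybridGraph V) : V → V → Prop :=
  Relation.ReflTransGen G.undir

/-- A chain is modeled by a function `f : V → ℕ` assigning each node the index of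
its block.  `G` is consistent with the chain `f` if directed edges go strictly
left-to-right and undirected edges stay within a block. -/
def ConsistentWith (G : HybridGraph V) (f : V → ℕ) : Prop :=
  (∀ x y, G.dir x y → f x < f y) ∧ (∀ x y, G.undir x y → f x = f y)

/-- A chain graph is a hybrid graph consistent with some chain. -/
def IsChainGraph (G : HybridGraph V) : Prop := ∃ f : V → ℕ, G.ConsistentWith f

/-- The component (maximal undirected-connected set) containing `x`. -/
def component (G : HybridGraph V) (x : V) : Set V := {y | G.uconn x y}

def IsComponent (G : HybridGraph V) (C : Set V) : Prop := ∃ x, C = G.component x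

/-- The descendants of a set of nodes. -/
def descendantsOf (G : HybridGraph V) (S : Set V) : Set V :=
  {y | ∃ x ∈ S, G.descendant x y}

/-- A component is terminal if its set of descendants is exactly itself. -/
def IsTerminal (G : HybridGraph V) (C : Set V) : Prop := G.descendantsOf C = C

/-- Parents of a set of nodes. -/
def Pa (G : HybridGraph V) (S : Set V) : Set V := {x | ∃ y ∈ S, G.dir x y}

/-- Neighbors of a set of nodes. -/
def nbr (G : HybridGraph V) (S : Set V) : Set V := {x | ∃ y ∈ S, G.undir x y}

/-- Boundary of a node: parents together with neighbors. -/
def Bd (G : HybridGraph V) (x : V) : Set V := {y | G.dir y x ∨ G.undir y x}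

inductive EdgeKind | fwd | bwd | und
deriving DecidableEq

/-- A route in `G` of length `n`: nodes `φ 0, …, φ n`, where the `i`-th edge is
directed forwards, directed backwards, or undirected according to `kind i`. -/
structure Route (G : HybridGraph V) where
  n : ℕ
  φ : ℕ → V
  kind : ℕ → EdgeKind
  valid : ∀ i < n,
    (kind i = EdgeKind.fwd → G.dir (φ i) (φ (i+1))) ∧
    (kind i = EdgeKind.bwd → G.dir (φ (i+1)) (φ i)) ∧
    (kind i = EdgeKind.und → G.undir (φ i) (φ (i+1)))

namespace Route

variable {G : HybridGraph V}

/-- Positions `a ≤ k ≤ b` form a collider section of the route: a maximal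
undirected subroute entered by an arrowhead on both sides. -/
def ColliderSec (ρ : Route G) (a b : ℕ) : Prop :=
  a ≤ b ∧ b < ρ.n ∧ 0 < a ∧
  (∀ i, a ≤ i → i < b → ρ.kind i = EdgeKind.und) ∧
  ρ.kind (a-1) = EdgeKind.fwd ∧ ρ.kind b = EdgeKind.bwd

/-- Position `k` lies in a collider section of the route. -/
def ColliderPos (ρ : Route G) (k : ℕ) : Prop :=
  ∃ a b, a ≤ k ∧ k ≤ b ∧ ρ.ColliderSec a b

/-- A route is `Z`-active when every collider section has a node in `Z` and every
non-collider section has no node in `Z`. -/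
def ZActive (ρ : Route G) (Z : Set V) : Prop :=
  (∀ a b, ρ.ColliderSec a b → ∃ k, a ≤ k ∧ k ≤ b ∧ ρ.φ k ∈ Z) ∧
  (∀ k, k ≤ ρ.n → ¬ ρ.ColliderPos k → ρ.φ k ∉ Z)

end Route

/-- Separation `X ⫫_G Y | Z`: no `Z`-active route between a node of `X` and a
node of `Y`. -/
def Sep (G : HybridGraph V) (X Y Z : Set V) : Prop :=
  ¬ ∃ ρ : Route G, ρ.φ 0 ∈ X ∧ ρ.φ ρ.n ∈ Y ∧ ρ.ZActive Z

/-- `I(H) ⊆ I(G)`: every separation statement of `H` is one of `G`. -/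
def ModelLe (H G : HybridGraph V) : Prop :=
  ∀ X Y Z : Set V, Disjoint X Y → Disjoint X Z → Disjoint Y Z →
    H.Sep X Y Z → G.Sep X Y Z

/-- Result of splitting the component `C` into `C \ L` and `L`: every undirected
edge from `C \ L` to `L` becomes directed towards `L`. -/
def splitGraph (G : HybridGraph V) (C L : Set V) : HybridGraph V where
  dir x y := G.dir x y ∨ (x ∈ C \ L ∧ y ∈ L ∧ G.undir x y)
  undir x y := G.undir x y ∧ ¬((x ∈ C \ L ∧ y ∈ L) ∨ (y ∈ C \ L ∧ x ∈ L))
  dir_irrefl := by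
    intro x h
    rcases h with h | ⟨hx, hy, _⟩
    · exact G.dir_irrefl x h
    · exact hx.2 hy
  undir_irrefl := fun x h => G.undir_irrefl x h.1
  undir_symm := by
    intro x y h
    exact ⟨G.undir_symm x y h.1, fun hc => h.2 (Or.symm hc)⟩

/-- `H` is obtained from `G` by a feasible split of a component `C` into the two
nonempty connected parts `C \ L` and `L`. -/
def IsFeasibleSplit (G H : HybridGraph V) : Prop :=
  ∃ C L : Set V, G.IsComponent C ∧ L ⊆ C ∧ L.Nonempty ∧ (C \ L).Nonempty ∧
    (∀ x ∈ L, ∀ y ∈ L, G.uconn x y) ∧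
    (∀ x ∈ C \ L, ∀ y ∈ C \ L, G.uconn x y) ∧
    (∀ x ∈ G.nbr L ∩ (C \ L), ∀ y ∈ G.nbr L ∩ (C \ L), x ≠ y → G.undir x y) ∧
    (∀ x ∈ G.Pa L, ∀ y ∈ G.nbr L ∩ (C \ L), G.dir x y) ∧
    H = G.splitGraph C L

/-- Result of merging the components `L` and `R`: every directed edge from `L`
to `R` becomes undirected. -/
def mergeGraph (G : HybridGraph V) (L R : Set V) : HybridGraph V where
  dir x y := G.dir x y ∧ ¬(x ∈ L ∧ y ∈ R)
  undir x y := G.undir x y ∨ (x ∈ L ∧ y ∈ R ∧ G.dir x y) ∨ (y ∈ L ∧ x ∈ R ∧ G.dir y x)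
  dir_irrefl := fun x h => G.dir_irrefl x h.1
  undir_irrefl := by
    intro x h
    rcases h with h | ⟨_, _, h⟩ | ⟨_, _, h⟩
    · exact G.undir_irrefl x h
    · exact G.dir_irrefl x h
    · exact G.dir_irrefl x h
  undir_symm := by
    intro x y h
    rcases h with h | h | h
    · exact Or.inl (G.undir_symm x y h)
    · exact Or.inr (Or.inr h)
    · exact Or.inr (Or.inl h)

/-- `H` is obtained from `G` by a feasible merging of two components `L`, `R`. -/
def IsFeasibleMerge (G H : HybridGraph V) : Prop :=
  ∃ L R : Set V, G.IsComponent L ∧ G.IsComponent R ∧ L ≠ R ∧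
    (G.Pa R ∩ L).Nonempty ∧
    (∀ x ∈ G.Pa R ∩ L, ∀ y ∈ G.Pa R ∩ L, x ≠ y → G.undir x y) ∧
    (∀ x ∈ G.Pa R \ L, ∀ y ∈ G.Pa R ∩ L, G.dir x y) ∧
    H = G.mergeGraph L R

/-- `H` is obtained from `G` by adding a single (previously absent) directed or
undirected edge between two distinct nodes. -/
def IsEdgeAddition (G H : HybridGraph V) : Prop :=
  ∃ a b : V, a ≠ b ∧
    ((¬ G.dir a b ∧ (H.dir = fun x y => G.dir x y ∨ (x = a ∧ y = b)) ∧
        H.undir = G.undir) ∨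
     (¬ G.undir a b ∧ H.dir = G.dir ∧
        (H.undir = fun x y => G.undir x y ∨ (x = a ∧ y = b) ∨ (x = b ∧ y = a))))

/-- `H` is obtained from `G` by removing a single directed or undirected edge. -/
def IsEdgeRemoval (G H : HybridGraph V) : Prop :=
  ∃ a b : V,
    (G.dir a b ∧ (H.dir = fun x y => G.dir x y ∧ ¬(x = a ∧ y = b)) ∧
       H.undir = G.undir) ∨
    (G.undir a b ∧ H.dir = G.dir ∧
       (H.undir = fun x y => G.undir x y ∧ ¬((x = a ∧ y = b) ∨ (x = b ∧ y = a))))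

end HybridGraph

open HybridGraph

variable {V : Type}

/-- `X`, `Y`, `Z`, `W` are pairwise disjoint. -/
def PairwiseDisj (X Y Z W : Set V) : Prop :=
  Disjoint X Y ∧ Disjoint X Z ∧ Disjoint X W ∧
  Disjoint Y Z ∧ Disjoint Y W ∧ Disjoint Z W

/-- A graphoid: an independence model closed under symmetry, decomposition,
weak union, contraction and intersection (for pairwise disjoint arguments). -/
structure Graphoid (V : Type) where
  ind : Set V → Set V → Set V → Prop
  symm : ∀ X Y Z : Set V, Disjoint X Y → Disjoint X Z → Disjoint Y Z →
    ind X Y Z → ind Y X Z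
  decomp : ∀ X Y W Z : Set V, PairwiseDisj X Y Z W → ind X (Y ∪ W) Z → ind X Y Z
  weakUnion : ∀ X Y W Z : Set V, PairwiseDisj X Y Z W → ind X (Y ∪ W) Z →
    ind X Y (Z ∪ W)
  contraction : ∀ X Y W Z : Set V, PairwiseDisj X Y Z W → ind X Y (Z ∪ W) →
    ind X W Z → ind X (Y ∪ W) Z
  inter : ∀ X Y W Z : Set V, PairwiseDisj X Y Z W → ind X Y (Z ∪ W) →
    ind X W (Z ∪ Y) → ind X (Y ∪ W) Z

/-- `G` is an independence map of the model `M`: `I(G) ⊆ M`. -/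
def IsIMap (G : HybridGraph V) (M : Set V → Set V → Set V → Prop) : Prop :=
  ∀ X Y Z : Set V, Disjoint X Y → Disjoint X Z → Disjoint Y Z →
    G.Sep X Y Z → M X Y Z

/-- `Gα` is a minimal independence map of `M` relative to the chain `f`. -/
def IsMinIMapRel (M : Set V → Set V → Set V → Prop) (f : V → ℕ)
    (Gα : HybridGraph V) : Prop :=
  Gα.ConsistentWith f ∧ IsIMap Gα M ∧
    ∀ H : HybridGraph V, IsEdgeRemoval Gα H → ¬ IsIMap H M

/-! ### Auxiliary development -/

namespace FSplit

open HybridGraph Relation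

attribute [local instance] Classical.propDecidable

variable {V : Type}

/-- undirected step avoiding `Z` at the target -/
def undZ (K : HybridGraph V) (Z : Set V) : V → V → Prop := fun a b => K.undir a b ∧ b ∉ Z

/-- undirected step avoiding `Z` at the source -/
def srcZ (K : HybridGraph V) (Z : Set V) : V → V → Prop := fun a b => K.undir a b ∧ a ∉ Z

/-- a `Z`-free undirected connection (non-collider run) -/
def NCp (K : HybridGraph V) (Z : Set V) (u v : V) : Prop :=
  u ∉ Z ∧ Relation.ReflTransGen (undZ K Z) u v

/-- an undirected connection through a `Z`-node (collider run) -/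
def CCp (K : HybridGraph V) (Z : Set V) (u v : V) : Prop :=
  ∃ z ∈ Z, Relation.ReflTransGen K.undir u z ∧ Relation.ReflTransGen K.undir z v

/-- one run-plus-arrow step of an active route; the boolean records whether the
state was entered through an arrow head -/
def AStep (K : HybridGraph V) (Z : Set V) : V × Bool → V × Bool → Prop := fun p q =>
  ∃ v, (q.2 = true ∧ NCp K Z p.1 v ∧ K.dir v q.1)
     ∨ (q.2 = false ∧ K.dir q.1 v ∧
          ((p.2 = true ∧ CCp K Z p.1 v) ∨ (p.2 = false ∧ NCp K Z p.1 v)))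

/-- chain-of-runs formulation of the existence of a `Z`-active route -/
def ActiveP (K : HybridGraph V) (Z X Y : Set V) : Prop :=
  ∃ x ∈ X, ∃ p : V × Bool, Relation.ReflTransGen (AStep K Z) (x, false) p ∧
    ∃ y ∈ Y, NCp K Z p.1 y

section Paths

lemma exists_path {r : V → V → Prop} {u v : V} (h : Relation.ReflTransGen r u v) :
    ∃ (m : ℕ) (ψ : ℕ → V), ψ 0 = u ∧ ψ m = v ∧ ∀ i, i < m → r (ψ i) (ψ (i+1)) := by
  induction h with
  | refl => exact ⟨0, fun _ => u, rfl, rfl, fun i hi => absurd hi (Nat.not_lt_zero i)⟩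
  | @tail b c _ hbc ih =>
    obtain ⟨m, ψ, h0, hm, hstep⟩ := ih
    refine ⟨m+1, fun i => if i ≤ m then ψ i else c, by simp [h0], by simp, ?_⟩
    intro i hi
    rcases Nat.lt_or_ge i m with h' | h'
    · simpa [Nat.le_of_lt h', Nat.succ_le_of_lt h'] using hstep i h'
    · have : i = m := by omega
      subst this
      simpa [hm] using hbc

lemma path_concat {r : V → V → Prop} {m₁ m₂ : ℕ} {ψ₁ ψ₂ : ℕ → V}
    (h₁ : ∀ i, i < m₁ → r (ψ₁ i) (ψ₁ (i+1))) (h₂ : ∀ i, i < m₂ → r (ψ₂ i) (ψ₂ (i+1)))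
    (hseam : ψ₁ m₁ = ψ₂ 0) :
    ∃ ψ : ℕ → V, ψ 0 = ψ₁ 0 ∧ ψ (m₁+m₂) = ψ₂ m₂ ∧
      (∀ i, i < m₁ + m₂ → r (ψ i) (ψ (i+1))) ∧ ψ m₁ = ψ₂ 0 := by
  refine ⟨fun i => if i < m₁ then ψ₁ i else ψ₂ (i - m₁), ?_, ?_, ?_, ?_⟩
  · rcases Nat.eq_zero_or_pos m₁ with h | h
    · subst h; simp [← hseam]
    · simp [h]
  · have : ¬ (m₁ + m₂ < m₁) := by omega
    simp [this]
  · intro i hi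
    rcases Nat.lt_or_ge i m₁ with h' | h'
    · rcases Nat.lt_or_ge (i+1) m₁ with h'' | h''
      · simpa [h', h''] using h₁ i h'
      · have him : i + 1 = m₁ := by omega
        have : i + 1 - m₁ = 0 := by omega
        simp only [if_pos h', if_neg (by omega : ¬ i + 1 < m₁), this]
        rw [← hseam, ← him]
        exact h₁ i h'
    · have e1 : ¬ i < m₁ := by omega
      have e2 : ¬ i + 1 < m₁ := by omega
      have e3 : i + 1 - m₁ = (i - m₁) + 1 := by omega
      simp only [if_neg e1, if_neg e2, e3]
      exact h₂ (i - m₁) (by omega)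
  · simp [hseam]

lemma seg_rtg {r : V → V → Prop} {ψ : ℕ → V} {a b : ℕ}
    (h : ∀ t, a ≤ t → t < b → r (ψ t) (ψ (t+1))) :
    ∀ i j, a ≤ i → i ≤ j → j ≤ b → Relation.ReflTransGen r (ψ i) (ψ j) := by
  intro i j hai hij hjb
  induction j, hij using Nat.le_induction with
  | base => exact Relation.ReflTransGen.refl
  | succ j hij ih =>
    exact Relation.ReflTransGen.tail (ih (by omega)) (h j (by omega) (by omega))

lemma seg_rtg_rev {r : V → V → Prop} {ψ : ℕ → V} {a b : ℕ}
    (h : ∀ t, a ≤ t → t < b → r (ψ (t+1)) (ψ t)) :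
    ∀ i j, a ≤ i → i ≤ j → j ≤ b → Relation.ReflTransGen r (ψ j) (ψ i) := by
  intro i j hai hij hjb
  induction j, hij using Nat.le_induction with
  | base => exact Relation.ReflTransGen.refl
  | succ j hij ih =>
    exact Relation.ReflTransGen.head (h j (by omega) (by omega)) (ih (by omega))

lemma rtg_rev {r : V → V → Prop} (hsym : ∀ a b, r a b → r b a) {u v : V}
    (h : Relation.ReflTransGen r u v) : Relation.ReflTransGen r v u := by
  induction h with
  | refl => exact Relation.ReflTransGen.refl
  | tail _ hbc ih => exact Relation.ReflTransGen.head (hsym _ _ hbc) ih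

lemma pathAllZ {K : HybridGraph V} {Z : Set V} {m : ℕ} {ψ : ℕ → V}
    (h0 : ψ 0 ∉ Z) (hstep : ∀ i, i < m → undZ K Z (ψ i) (ψ (i+1))) :
    ∀ i, i ≤ m → ψ i ∉ Z := by
  intro i hi
  cases i with
  | zero => exact h0
  | succ i => exact (hstep i (by omega)).2

lemma nc_last {K : HybridGraph V} {Z : Set V} {u v : V} (h : NCp K Z u v) : v ∉ Z := by
  obtain ⟨h0, h⟩ := h
  induction h with
  | refl => exact h0
  | tail _ hbc _ => exact hbc.2

lemma nc_toSrc {K : HybridGraph V} {Z : Set V} {u v : V} (h : NCp K Z u v) :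
    Relation.ReflTransGen (srcZ K Z) u v := by
  obtain ⟨h0, h⟩ := h
  induction h using Relation.ReflTransGen.head_induction_on with
  | refl => exact Relation.ReflTransGen.refl
  | head hab hbc ih =>
    exact Relation.ReflTransGen.head ⟨hab.1, h0⟩ (ih hab.2)

lemma src_toNC {K : HybridGraph V} {Z : Set V} {u v : V}
    (h : Relation.ReflTransGen (srcZ K Z) u v) (hv : v ∉ Z) : NCp K Z u v := by
  induction h using Relation.ReflTransGen.head_induction_on with
  | refl => exact ⟨hv, Relation.ReflTransGen.refl⟩
  | head hab hbc ih =>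
    obtain ⟨hb, hr⟩ := ih
    exact ⟨hab.2, Relation.ReflTransGen.head ⟨hab.1, hb⟩ hr⟩

lemma nc_append {K : HybridGraph V} {Z : Set V} {u v w : V} (h : NCp K Z u v)
    (h' : Relation.ReflTransGen (undZ K Z) v w) : NCp K Z u w :=
  ⟨h.1, Relation.ReflTransGen.trans h.2 h'⟩

end Paths

section Extract

variable {K : HybridGraph V} {Z : Set V}

lemma extract (ρ : Route K) (hZ : ρ.ZActive Z) :
    ∀ (d k : ℕ) (h : Bool), k ≤ ρ.n →
    (k = 0 ∨ ρ.kind (k-1) ≠ EdgeKind.und) →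
    (h = true → 0 < k ∧ ρ.kind (k-1) = EdgeKind.fwd) →
    (h = false → k = 0 ∨ ρ.kind (k-1) = EdgeKind.bwd) →
    ρ.n - k ≤ d →
    ∃ p, Relation.ReflTransGen (AStep K Z) (ρ.φ k, h) p ∧ NCp K Z p.1 (ρ.φ ρ.n) := by
  intro d
  induction d with
  | zero =>
    intro k h hk hks hht hhf hd
    -- here the current run must reach the end of the route
    have hPex : ∃ t, k + t = ρ.n ∨ ρ.kind (k+t) ≠ EdgeKind.und := ⟨ρ.n - k, by left; omega⟩
    have hkn : k = ρ.n := by omega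
    -- the run from k to n is a non-collider (it contains the endpoint)
    have hnc : ∀ j, k ≤ j → j ≤ ρ.n → ρ.φ j ∉ Z := by
      intro j h1 h2
      have hj : j = ρ.n := by omega
      rw [hj]
      refine hZ.2 ρ.n le_rfl ?_
      rintro ⟨a, b, hja, hjb, hcs⟩
      exact absurd hcs.2.1 (by omega)
    refine ⟨(ρ.φ k, h), Relation.ReflTransGen.refl, ?_⟩
    have : ρ.φ k = ρ.φ ρ.n := by rw [hkn]
    rw [show ((ρ.φ k, h) : V × Bool).1 = ρ.φ k from rfl, this]
    exact ⟨hnc ρ.n (by omega) le_rfl, Relation.ReflTransGen.refl⟩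
  | succ d ih =>
    intro k h hk hks hht hhf hd
    have hPex : ∃ t, k + t = ρ.n ∨ ρ.kind (k+t) ≠ EdgeKind.und := ⟨ρ.n - k, by left; omega⟩
    set t₀ := Nat.find hPex with ht₀
    set e := k + t₀ with he
    have hPe : e = ρ.n ∨ ρ.kind e ≠ EdgeKind.und := Nat.find_spec hPex
    have he_le : e ≤ ρ.n := by
      have : t₀ ≤ ρ.n - k := Nat.find_min' hPex (by left; omega)
      omega
    have hke : k ≤ e := by omega
    have hmin : ∀ i, k ≤ i → i < e → ρ.kind i = EdgeKind.und ∧ i ≠ ρ.n := by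
      intro i h1 h2
      have hlt : i - k < t₀ := by omega
      have := Nat.find_min hPex hlt
      rw [show k + (i - k) = i by omega] at this
      push_neg at this
      exact ⟨this.2, this.1⟩
    have hrun_und : ∀ i, k ≤ i → i < e → ρ.kind i = EdgeKind.und := fun i h1 h2 => (hmin i h1 h2).1
    have hrun_step : ∀ i, k ≤ i → i < e → K.undir (ρ.φ i) (ρ.φ (i+1)) := by
      intro i h1 h2
      exact (ρ.valid i (by omega)).2.2 (hrun_und i h1 h2)
    have hpath : ∀ i j, k ≤ i → i ≤ j → j ≤ e → Relation.ReflTransGen K.undir (ρ.φ i) (ρ.φ j) :=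
      seg_rtg (r := K.undir) (ψ := ρ.φ) (a := k) (b := e) hrun_step
    -- uniqueness of collider sections covering a position of the current run
    have hsec : ∀ a b, ρ.ColliderSec a b → ∀ j, a ≤ j → j ≤ b → k ≤ j → j ≤ e →
        a = k ∧ b = e := by
      intro a b hcs j hja hjb hkj hje
      obtain ⟨hab, hbn, ha0, hund, hfwd, hbwd⟩ := hcs
      have hak : a = k := by
        rcases Nat.lt_trichotomy a k with h' | h' | h'
        · exfalso
          have h1 : a ≤ k - 1 := by omega
          have h2 : k - 1 < b := by omega
          have := hund (k-1) h1 h2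
          rcases hks with h3 | h3
          · omega
          · exact h3 this
        · exact h'
        · exfalso
          have h1 : k ≤ a - 1 := by omega
          have h2 : a - 1 < e := by omega
          have := hrun_und (a-1) h1 h2
          rw [this] at hfwd
          exact EdgeKind.noConfusion hfwd
      refine ⟨hak, ?_⟩
      rcases Nat.lt_trichotomy b e with h' | h' | h'
      · exfalso
        have := hrun_und b (by omega) h'
        rw [this] at hbwd
        exact EdgeKind.noConfusion hbwd
      · exact h'
      · exfalso
        have h1 : a ≤ e := by omega
        have h2 : e < b := by omega
        have := hund e h1 h2
        rcases hPe with h3 | h3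
        · omega
        · exact h3 this
    -- if the current run is not a collider section, all of its nodes avoid Z
    have hncrun : ¬ (0 < k ∧ ρ.kind (k-1) = EdgeKind.fwd ∧ e < ρ.n ∧ ρ.kind e = EdgeKind.bwd) →
        ∀ j, k ≤ j → j ≤ e → ρ.φ j ∉ Z := by
      intro hnot j h1 h2
      refine hZ.2 j (by omega) ?_
      rintro ⟨a, b, hja, hjb, hcs⟩
      obtain ⟨hak, hbe⟩ := hsec a b hcs j hja hjb h1 h2
      subst hak; subst hbe
      obtain ⟨hab, hbn, ha0, hund, hfwd, hbwd⟩ := hcs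
      exact hnot ⟨ha0, hfwd, hbn, hbwd⟩
    have hpathZ : (∀ j, k ≤ j → j ≤ e → ρ.φ j ∉ Z) →
        Relation.ReflTransGen (undZ K Z) (ρ.φ k) (ρ.φ e) := by
      intro hall
      refine seg_rtg (r := undZ K Z) (ψ := ρ.φ) (a := k) (b := e) ?_ k e le_rfl hke le_rfl
      intro i h1 h2
      exact ⟨hrun_step i h1 h2, hall (i+1) (by omega) (by omega)⟩
    by_cases hen : e = ρ.n
    · -- final run
      have hnc : ∀ j, k ≤ j → j ≤ e → ρ.φ j ∉ Z := by
        refine hncrun ?_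
        rintro ⟨_, _, h', _⟩
        omega
      refine ⟨(ρ.φ k, h), Relation.ReflTransGen.refl, ?_⟩
      have hNCke : NCp K Z (ρ.φ k) (ρ.φ e) := ⟨hnc k le_rfl hke, hpathZ hnc⟩
      rw [show ((ρ.φ k, h) : V × Bool).1 = ρ.φ k from rfl, ← hen]
      exact hNCke
    · have he_lt : e < ρ.n := lt_of_le_of_ne he_le hen
      have hkund : ρ.kind e ≠ EdgeKind.und := hPe.resolve_left hen
      rcases hfb : ρ.kind e with _ | _ | _
      · -- fwd: tail exit
        have hdir : K.dir (ρ.φ e) (ρ.φ (e+1)) := (ρ.valid e he_lt).1 hfb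
        have hnc : ∀ j, k ≤ j → j ≤ e → ρ.φ j ∉ Z := by
          refine hncrun ?_
          rintro ⟨_, _, _, h'⟩
          rw [hfb] at h'
          exact EdgeKind.noConfusion h'
        have hstep1 : AStep K Z (ρ.φ k, h) (ρ.φ (e+1), true) :=
          ⟨ρ.φ e, Or.inl ⟨rfl, ⟨hnc k le_rfl hke, hpathZ hnc⟩, hdir⟩⟩
        obtain ⟨p, hp, hNC⟩ := ih (e+1) true (by omega)
          (Or.inr (by simpa using hkund)) (fun _ => ⟨by omega, by simpa using hfb⟩)
          (fun hc => by exact Bool.noConfusion hc) (by omega)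
        exact ⟨p, Relation.ReflTransGen.head hstep1 hp, hNC⟩
      · -- bwd: head exit
        have hdir : K.dir (ρ.φ (e+1)) (ρ.φ e) := (ρ.valid e he_lt).2.1 hfb
        have hstep1 : AStep K Z (ρ.φ k, h) (ρ.φ (e+1), false) := by
          cases h with
          | true =>
            obtain ⟨hk0, hkfwd⟩ := hht rfl
            have hcs : ρ.ColliderSec k e := ⟨hke, he_lt, hk0, hrun_und, hkfwd, hfb⟩
            obtain ⟨j, hj1, hj2, hjZ⟩ := hZ.1 k e hcs
            exact ⟨ρ.φ e, Or.inr ⟨rfl, hdir,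
              Or.inl ⟨rfl, ⟨ρ.φ j, hjZ, hpath k j le_rfl hj1 (by omega), hpath j e hj1 hj2 le_rfl⟩⟩⟩⟩
          | false =>
            have hnc : ∀ j, k ≤ j → j ≤ e → ρ.φ j ∉ Z := by
              refine hncrun ?_
              rintro ⟨h0, hfw, _, _⟩
              rcases hhf rfl with h' | h'
              · omega
              · rw [h'] at hfw; exact EdgeKind.noConfusion hfw
            exact ⟨ρ.φ e, Or.inr ⟨rfl, hdir, Or.inr ⟨rfl, ⟨hnc k le_rfl hke, hpathZ hnc⟩⟩⟩⟩
        obtain ⟨p, hp, hNC⟩ := ih (e+1) false (by omega)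
          (Or.inr (by simpa using hkund)) (fun hc => by exact Bool.noConfusion hc)
          (fun _ => Or.inr (by simpa using hfb)) (by omega)
        exact ⟨p, Relation.ReflTransGen.head hstep1 hp, hNC⟩
      · -- contradiction with hkund
        exact absurd hfb hkund

lemma route_to_active {X Y : Set V} (ρ : Route K) (hX : ρ.φ 0 ∈ X) (hY : ρ.φ ρ.n ∈ Y)
    (hZ : ρ.ZActive Z) : ActiveP K Z X Y := by
  obtain ⟨p, hp, hNC⟩ := extract ρ hZ ρ.n 0 false (by omega) (Or.inl rfl)
    (fun hc => by exact Bool.noConfusion hc) (fun _ => Or.inl rfl) (by omega)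
  exact ⟨ρ.φ 0, hX, p, hp, ρ.φ ρ.n, hY, hNC⟩

end Extract

section Build

variable {K : HybridGraph V} {Z : Set V}

/-- partial goodness of a route under construction: it ends at the state `p`,
all complete collider sections contain a `Z`-node, and all complete
non-collider positions avoid `Z`. -/
def PG (K : HybridGraph V) (Z : Set V) (x : V) (p : V × Bool) (ρ : Route K) : Prop :=
  ρ.φ 0 = x ∧ ρ.φ ρ.n = p.1 ∧
  (p.2 = true → 0 < ρ.n ∧ ρ.kind (ρ.n - 1) = EdgeKind.fwd) ∧
  (p.2 = false → ρ.n = 0 ∨ ρ.kind (ρ.n - 1) = EdgeKind.bwd) ∧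
  (∀ a b, ρ.ColliderSec a b → ∃ j, a ≤ j ∧ j ≤ b ∧ ρ.φ j ∈ Z) ∧
  (∀ k, k < ρ.n → ¬ ρ.ColliderPos k → ρ.φ k ∉ Z)

lemma PG_extend {x : V} {p : V × Bool} {ρ : Route K} (hPG : PG K Z x p ρ)
    (m : ℕ) (ψ : ℕ → V) (hψ0 : ψ 0 = p.1)
    (hstep : ∀ i, i < m → K.undir (ψ i) (ψ (i+1)))
    (b : Bool) (w' : V)
    (hdirT : b = true → K.dir (ψ m) w')
    (hdirF : b = false → K.dir w' (ψ m))
    (hpayN : (b = true ∨ p.2 = false) → ∀ i, i ≤ m → ψ i ∉ Z)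
    (hpayC : b = false → p.2 = true → ∃ j, j ≤ m ∧ ψ j ∈ Z) :
    ∃ ρ' : Route K, PG K Z x (w', b) ρ' := by
  obtain ⟨hx, hpn, hp2t, hp2f, hsecs, hncol⟩ := hPG
  set n := ρ.n with hn
  set φ' : ℕ → V := fun i => if i ≤ n then ρ.φ i else if i ≤ n + m then ψ (i - n) else w'
    with hφ'
  set kind' : ℕ → EdgeKind := fun i => if i < n then ρ.kind i else
    if i < n + m then EdgeKind.und else (if b then EdgeKind.fwd else EdgeKind.bwd) with hkind'
  have f1 : ∀ i, i ≤ n → φ' i = ρ.φ i := fun i hi => by simp [hφ', hi]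
  have f2 : ∀ i, n ≤ i → i ≤ n + m → φ' i = ψ (i - n) := by
    intro i h1 h2
    rcases Nat.eq_or_lt_of_le h1 with h' | h'
    · rw [← h', f1 n le_rfl, show n - n = 0 by omega, hψ0, hpn]
    · simp [hφ', (show ¬ i ≤ n by omega), h2]
  have f3 : φ' (n + m + 1) = w' := by simp [hφ', (show ¬ n + m + 1 ≤ n by omega), (show ¬ n + m + 1 ≤ n + m by omega)]
  have k1 : ∀ i, i < n → kind' i = ρ.kind i := fun i hi => by simp [hkind', hi]
  have k2 : ∀ i, n ≤ i → i < n + m → kind' i = EdgeKind.und := fun i h1 h2 => by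
    simp [hkind', (show ¬ i < n by omega), h2]
  have k3 : kind' (n + m) = (if b then EdgeKind.fwd else EdgeKind.bwd) := by
    simp [hkind', (show ¬ n + m < n by omega)]
  have hvalid : ∀ i, i < n + m + 1 →
      (kind' i = EdgeKind.fwd → K.dir (φ' i) (φ' (i+1))) ∧
      (kind' i = EdgeKind.bwd → K.dir (φ' (i+1)) (φ' i)) ∧
      (kind' i = EdgeKind.und → K.undir (φ' i) (φ' (i+1))) := by
    intro i hi
    rcases Nat.lt_or_ge i n with h1 | h1
    · rw [k1 i h1, f1 i (by omega), f1 (i+1) (by omega)]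
      exact ρ.valid i h1
    · rcases Nat.lt_or_ge i (n + m) with h2 | h2
      · rw [k2 i h1 h2, f2 i h1 (by omega), f2 (i+1) (by omega) (by omega),
          show i + 1 - n = (i - n) + 1 by omega]
        refine ⟨fun hc => EdgeKind.noConfusion hc, fun hc => EdgeKind.noConfusion hc, fun _ => ?_⟩
        exact hstep (i - n) (by omega)
      · have hieq : i = n + m := by omega
        subst hieq
        rw [k3, f2 (n+m) (by omega) le_rfl, show n + m - n = m by omega, f3]
        cases b with
        | true =>
          exact ⟨fun _ => hdirT rfl, fun hc => by simp at hc, fun hc => by simp at hc⟩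
        | false =>
          exact ⟨fun hc => by simp at hc, fun _ => hdirF rfl, fun hc => by simp at hc⟩
  refine ⟨⟨n + m + 1, φ', kind', hvalid⟩, ?_, ?_, ?_, ?_, ?_, ?_⟩
  · show φ' 0 = x
    rw [f1 0 (by omega)]; exact hx
  · exact f3
  · intro hb
    have hb' : b = true := hb
    constructor
    · show 0 < n + m + 1; omega
    · show kind' (n + m + 1 - 1) = EdgeKind.fwd
      rw [show n + m + 1 - 1 = n + m by omega, k3, hb']
      simp
  · intro hb
    have hb' : b = false := hb
    right
    show kind' (n + m + 1 - 1) = EdgeKind.bwd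
    rw [show n + m + 1 - 1 = n + m by omega, k3, hb']
    simp
  · -- collider sections of the extended route
    rintro a b' ⟨hab, hbn0, ha0, hund0, hfwd0, hbwd0⟩
    have hbn' : b' < n + m + 1 := hbn0
    have hund : ∀ i, a ≤ i → i < b' → kind' i = EdgeKind.und := hund0
    have hfwd : kind' (a-1) = EdgeKind.fwd := hfwd0
    have hbwd : kind' b' = EdgeKind.bwd := hbwd0
    have hble : b' ≤ n + m := by omega
    rcases Nat.lt_or_ge b' n with hbn | hbn
    · -- an old section
      have hcs : ρ.ColliderSec a b' := by
        refine ⟨hab, hbn, ha0, ?_, ?_, ?_⟩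
        · intro i h1 h2
          have h3 := hund i h1 h2
          rwa [k1 i (by omega)] at h3
        · have h3 := hfwd; rwa [k1 (a-1) (by omega)] at h3
        · have h3 := hbwd; rwa [k1 b' hbn] at h3
      obtain ⟨j, hj1, hj2, hjZ⟩ := hsecs a b' hcs
      refine ⟨j, hj1, hj2, ?_⟩
      show φ' j ∈ Z
      rw [f1 j (by omega)]; exact hjZ
    · -- the new section
      have hbeq : b' = n + m := by
        rcases Nat.lt_or_ge b' (n+m) with h' | h'
        · exfalso; rw [k2 b' hbn h'] at hbwd; exact EdgeKind.noConfusion hbwd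
        · omega
      have hbf : b = false := by
        cases hbb : b with
        | true => rw [hbeq, k3, hbb] at hbwd; simp at hbwd
        | false => rfl
      have han : a = n := by
        rcases Nat.lt_trichotomy a n with h' | h' | h'
        · exfalso
          -- then position n-1 is interior, but it is a directed edge of ρ
          have hn1 : 0 < n := by omega
          have h2 : ρ.kind (n-1) = EdgeKind.und := by
            have := hund (n-1) (by omega) (by omega)
            rwa [k1 (n-1) (by omega)] at this
          cases hp2 : p.2 with
          | true => have := (hp2t hp2).2; rw [h2] at this; exact EdgeKind.noConfusion this
          | false =>
            rcases hp2f hp2 with h3 | h3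
            · omega
            · rw [h2] at h3; exact EdgeKind.noConfusion h3
        · exact h'
        · exfalso
          have h1 : a - 1 < n + m := by omega
          have h2 : n ≤ a - 1 := by omega
          rw [k2 (a-1) h2 h1] at hfwd
          exact EdgeKind.noConfusion hfwd
      have hp2 : p.2 = true := by
        have hn1 : 0 < n := by omega
        have h2 : kind' (a - 1) = ρ.kind (n - 1) := by rw [han, k1 (n-1) (by omega)]
        cases hp2 : p.2 with
        | false =>
          exfalso
          rcases hp2f hp2 with h3 | h3
          · omega
          · rw [h2, h3] at hfwd; exact EdgeKind.noConfusion hfwd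
        | true => rfl
      obtain ⟨j, hjm, hjZ⟩ := hpayC hbf hp2
      refine ⟨n + j, by omega, by omega, ?_⟩
      show φ' (n + j) ∈ Z
      rw [f2 (n+j) (by omega) (by omega), show n + j - n = j by omega]
      exact hjZ
  · -- non-collider positions avoid Z
    intro k hk hnp
    have hk' : k < n + m + 1 := hk
    clear hk
    rcases Nat.lt_or_ge k n with hkn | hkn
    · show φ' k ∉ Z
      rw [f1 k (by omega)]
      refine hncol k hkn ?_
      rintro ⟨a, b', h1, h2, hcs⟩
      refine hnp ⟨a, b', h1, h2, ?_⟩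
      obtain ⟨hab, hbn, ha0, hund, hfwd, hbwd⟩ := hcs
      refine ⟨hab, by show b' < n + m + 1; omega, ha0, ?_, ?_, ?_⟩
      · intro i hi1 hi2; show kind' i = EdgeKind.und
        rw [k1 i (by omega)]; exact hund i hi1 hi2
      · show kind' (a-1) = EdgeKind.fwd
        rw [k1 (a-1) (by omega)]; exact hfwd
      · show kind' b' = EdgeKind.bwd
        rw [k1 b' (by omega)]; exact hbwd
    · have hkm : k ≤ n + m := by omega
      show φ' k ∉ Z
      rw [f2 k hkn hkm]
      cases hb : b with
      | true => exact hpayN (Or.inl hb) _ (by omega)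
      | false =>
        cases hp2 : p.2 with
        | false => exact hpayN (Or.inr hp2) _ (by omega)
        | true =>
          exfalso
          have hn1 : 0 < n := (hp2t hp2).1
          refine hnp ⟨n, n + m, hkn, hkm, ?_⟩
          refine ⟨by omega, by show n + m < n + m + 1; omega, hn1, ?_, ?_, ?_⟩
          · intro i h1 h2; exact k2 i h1 h2
          · show kind' (n - 1) = EdgeKind.fwd
            have hsub : n + 0 - 1 = n - 1 := by omega
            rw [show n - 1 = n - 1 from rfl, k1 (n-1) (by omega)]; exact (hp2t hp2).2
          · show kind' (n + m) = EdgeKind.bwd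
            rw [k3, hb]; simp
  
lemma PG_finish {X Y : Set V} {x : V} {p : V × Bool} {ρ : Route K} (hPG : PG K Z x p ρ)
    (m : ℕ) (ψ : ℕ → V) (hψ0 : ψ 0 = p.1)
    (hstep : ∀ i, i < m → K.undir (ψ i) (ψ (i+1)))
    (hz : ∀ i, i ≤ m → ψ i ∉ Z)
    (hX : x ∈ X) (hY : ψ m ∈ Y) :
    ∃ ρ' : Route K, ρ'.φ 0 ∈ X ∧ ρ'.φ ρ'.n ∈ Y ∧ ρ'.ZActive Z := by
  obtain ⟨hx, hpn, hp2t, hp2f, hsecs, hncol⟩ := hPG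
  set n := ρ.n with hn
  set φ' : ℕ → V := fun i => if i ≤ n then ρ.φ i else ψ (i - n) with hφ'
  set kind' : ℕ → EdgeKind := fun i => if i < n then ρ.kind i else EdgeKind.und with hkind'
  have f1 : ∀ i, i ≤ n → φ' i = ρ.φ i := fun i hi => by simp [hφ', hi]
  have f2 : ∀ i, n ≤ i → φ' i = ψ (i - n) := by
    intro i h1
    rcases Nat.eq_or_lt_of_le h1 with h' | h'
    · rw [← h', f1 n le_rfl, show n - n = 0 by omega, hψ0, hpn]
    · simp [hφ', (show ¬ i ≤ n by omega)]
  have k1 : ∀ i, i < n → kind' i = ρ.kind i := fun i hi => by simp [hkind', hi]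
  have k2 : ∀ i, n ≤ i → kind' i = EdgeKind.und := fun i h1 => by
    simp [hkind', (show ¬ i < n by omega)]
  have hvalid : ∀ i, i < n + m →
      (kind' i = EdgeKind.fwd → K.dir (φ' i) (φ' (i+1))) ∧
      (kind' i = EdgeKind.bwd → K.dir (φ' (i+1)) (φ' i)) ∧
      (kind' i = EdgeKind.und → K.undir (φ' i) (φ' (i+1))) := by
    intro i hi
    rcases Nat.lt_or_ge i n with h1 | h1
    · rw [k1 i h1, f1 i (by omega), f1 (i+1) (by omega)]
      exact ρ.valid i h1
    · rw [k2 i h1, f2 i h1, f2 (i+1) (by omega), show i + 1 - n = (i - n) + 1 by omega]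
      refine ⟨fun hc => EdgeKind.noConfusion hc, fun hc => EdgeKind.noConfusion hc, fun _ => ?_⟩
      exact hstep (i - n) (by omega)
  refine ⟨⟨n + m, φ', kind', hvalid⟩, ?_, ?_, ?_, ?_⟩
  · show φ' 0 ∈ X
    rw [f1 0 (by omega), hx]; exact hX
  · show φ' (n + m) ∈ Y
    rw [f2 (n+m) (by omega), show n + m - n = m by omega]; exact hY
  · -- collider sections all lie in the old part
    rintro a b' ⟨hab, hbn0, ha0, hund0, hfwd0, hbwd0⟩
    have hbn' : b' < n + m := hbn0
    have hund : ∀ i, a ≤ i → i < b' → kind' i = EdgeKind.und := hund0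
    have hfwd : kind' (a-1) = EdgeKind.fwd := hfwd0
    have hbwd : kind' b' = EdgeKind.bwd := hbwd0
    have hbn : b' < n := by
      by_contra h'
      rw [k2 b' (by omega)] at hbwd
      exact EdgeKind.noConfusion hbwd
    have hcs : ρ.ColliderSec a b' := by
      refine ⟨hab, hbn, ha0, ?_, ?_, ?_⟩
      · intro i h1 h2
        have h3 := hund i h1 h2
        rwa [k1 i (by omega)] at h3
      · have h3 := hfwd; rwa [k1 (a-1) (by omega)] at h3
      · have h3 := hbwd; rwa [k1 b' hbn] at h3
    obtain ⟨j, hj1, hj2, hjZ⟩ := hsecs a b' hcs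
    refine ⟨j, hj1, hj2, ?_⟩
    show φ' j ∈ Z
    rw [f1 j (by omega)]; exact hjZ
  · intro k hk hnp
    have hk' : k ≤ n + m := hk
    clear hk
    rcases Nat.lt_or_ge k n with hkn | hkn
    · show φ' k ∉ Z
      rw [f1 k (by omega)]
      refine hncol k hkn ?_
      rintro ⟨a, b', h1, h2, hcs⟩
      refine hnp ⟨a, b', h1, h2, ?_⟩
      obtain ⟨hab, hbn, ha0, hund, hfwd, hbwd⟩ := hcs
      refine ⟨hab, by show b' < n + m; omega, ha0, ?_, ?_, ?_⟩
      · intro i hi1 hi2; show kind' i = EdgeKind.und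
        rw [k1 i (by omega)]; exact hund i hi1 hi2
      · show kind' (a-1) = EdgeKind.fwd
        rw [k1 (a-1) (by omega)]; exact hfwd
      · show kind' b' = EdgeKind.bwd
        rw [k1 b' (by omega)]; exact hbwd
    · show φ' k ∉ Z
      rw [f2 k hkn]
      exact hz _ (by omega)

lemma PG_step {x : V} {p q : V × Bool} {ρ : Route K} (hPG : PG K Z x p ρ)
    (hstep : AStep K Z p q) : ∃ ρ' : Route K, PG K Z x q ρ' := by
  obtain ⟨v, hcase⟩ := hstep
  obtain ⟨w', qb⟩ := q
  rcases hcase with ⟨hqb, hNC, hdir⟩ | ⟨hqb, hdir, hpay⟩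
  · -- tail entry
    simp only [] at hqb hdir
    subst hqb
    obtain ⟨h0, hrtg⟩ := hNC
    obtain ⟨m, ψ, hψ0, hψm, hψstep⟩ := exists_path hrtg
    have hallZ : ∀ i, i ≤ m → ψ i ∉ Z :=
      pathAllZ (by rw [hψ0]; exact h0) hψstep
    refine PG_extend hPG m ψ hψ0 (fun i hi => (hψstep i hi).1) true w'
      (fun _ => by rw [hψm]; exact hdir) (fun hc => by exact Bool.noConfusion hc)
      (fun _ => hallZ) (fun hc => by exact Bool.noConfusion hc)
  · simp only [] at hqb hdir
    subst hqb
    rcases hpay with ⟨hp2, hCC⟩ | ⟨hp2, hNC⟩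
    · -- collider run
      obtain ⟨z, hzZ, hr1, hr2⟩ := hCC
      obtain ⟨m₁, ψ₁, h10, h1m, h1s⟩ := exists_path hr1
      obtain ⟨m₂, ψ₂, h20, h2m, h2s⟩ := exists_path hr2
      obtain ⟨ψ, hc0, hcm, hcs, hcseam⟩ := path_concat h1s h2s (by rw [h1m, h20])
      refine PG_extend hPG (m₁ + m₂) ψ (by rw [hc0, h10]) hcs false w'
        (fun hc => by exact Bool.noConfusion hc) (fun _ => by rw [hcm, h2m]; exact hdir)
        (fun hor => ?_) (fun _ _ => ⟨m₁, by omega, by rw [hcseam, h20]; exact hzZ⟩)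
      rcases hor with hc | hc
      · exact absurd hc (by simp)
      · rw [hp2] at hc; exact Bool.noConfusion hc
    · -- non-collider run
      obtain ⟨h0, hrtg⟩ := hNC
      obtain ⟨m, ψ, hψ0, hψm, hψstep⟩ := exists_path hrtg
      have hallZ : ∀ i, i ≤ m → ψ i ∉ Z :=
        pathAllZ (by rw [hψ0]; exact h0) hψstep
      refine PG_extend hPG m ψ hψ0 (fun i hi => (hψstep i hi).1) false w'
        (fun hc => by exact Bool.noConfusion hc) (fun _ => by rw [hψm]; exact hdir)
        (fun _ => hallZ) (fun _ hc => by rw [hp2] at hc; exact Bool.noConfusion hc)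

lemma active_to_route {X Y : Set V} (h : ActiveP K Z X Y) :
    ∃ ρ : Route K, ρ.φ 0 ∈ X ∧ ρ.φ ρ.n ∈ Y ∧ ρ.ZActive Z := by
  obtain ⟨x, hx, p, hsteps, y, hy, hNC⟩ := h
  have hPG : ∃ ρ : Route K, PG K Z x p ρ := by
    clear hNC hy
    induction hsteps with
    | refl =>
      refine ⟨⟨0, fun _ => x, fun _ => EdgeKind.und, fun i hi => absurd hi (Nat.not_lt_zero i)⟩,
        rfl, rfl, ?_, fun _ => Or.inl rfl, ?_, ?_⟩
      · intro hc; exact Bool.noConfusion hc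
      · rintro a b ⟨_, hbn, _, _, _, _⟩; exact absurd hbn (Nat.not_lt_zero b)
      · intro k hk; exact absurd hk (Nat.not_lt_zero k)
    | tail _ hstep ih =>
      obtain ⟨ρ, hρ⟩ := ih
      exact PG_step hρ hstep
  obtain ⟨ρ, hρ⟩ := hPG
  obtain ⟨h0, hrtg⟩ := hNC
  obtain ⟨m, ψ, hψ0, hψm, hψstep⟩ := exists_path hrtg
  exact PG_finish hρ m ψ hψ0 (fun i hi => (hψstep i hi).1)
    (pathAllZ (by rw [hψ0]; exact h0) hψstep) hx (by rw [hψm]; exact hy)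

end Build

section Split

variable {G : HybridGraph V} {C L Z : Set V} {x₀ : V}

/-- the split sources: neighbours of `L` inside `C \ L` -/
local notation "SS" => G.nbr L ∩ (C \ L)


lemma mem_C_of_und (hC : C = G.component x₀) (h : G.undir a b) (ha : a ∈ C) : b ∈ C := by
  subst hC
  exact Relation.ReflTransGen.tail ha h

lemma mem_C_of_und' (hC : C = G.component x₀) (h : G.undir a b) (hb : b ∈ C) : a ∈ C :=
  mem_C_of_und hC (G.undir_symm a b h) hb

lemma Hund_G {a b : V} (h : (G.splitGraph C L).undir a b) : G.undir a b := h.1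

lemma Hdir_old {a b : V} (h : G.dir a b) : (G.splitGraph C L).dir a b := Or.inl h

lemma Hdir_new {a b : V} (ha : a ∈ C) (haL : a ∉ L) (hb : b ∈ L) (h : G.undir a b) :
    (G.splitGraph C L).dir a b := Or.inr ⟨⟨ha, haL⟩, hb, h⟩

lemma Hund_of_iff {a b : V} (h : G.undir a b) (hiff : a ∈ L ↔ b ∈ L) :
    (G.splitGraph C L).undir a b := by
  refine ⟨h, ?_⟩
  rintro (⟨haC, hbL⟩ | ⟨hbC, haL⟩)
  · exact haC.2 (hiff.mpr hbL)
  · exact hbC.2 (hiff.mp haL)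

lemma Hund_L_iff (hC : C = G.component x₀) (hLC : L ⊆ C) {a b : V} (h : (G.splitGraph C L).undir a b) : (a ∈ L ↔ b ∈ L) := by
  obtain ⟨hu, hncr⟩ := h
  constructor
  · intro haL
    by_contra hbL
    exact hncr (Or.inr ⟨⟨mem_C_of_und hC hu (hLC haL), hbL⟩, haL⟩)
  · intro hbL
    by_contra haL
    exact hncr (Or.inl ⟨⟨mem_C_of_und' hC hu (hLC hbL), haL⟩, hbL⟩)

lemma Hrtg_L_iff (hC : C = G.component x₀) (hLC : L ⊆ C) {a b : V} (h : Relation.ReflTransGen (G.splitGraph C L).undir a b) :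
    (a ∈ L ↔ b ∈ L) := by
  induction h with
  | refl => exact Iff.rfl
  | tail _ hbc ih => exact ih.trans (Hund_L_iff hC hLC hbc)

lemma Hdir_cases {a b : V} (h : (G.splitGraph C L).dir a b) :
    G.dir a b ∨ (a ∈ C ∧ a ∉ L ∧ b ∈ L ∧ G.undir a b) := by
  rcases h with h | ⟨⟨h1, h2⟩, h3, h4⟩
  · exact Or.inl h
  · exact Or.inr ⟨h1, h2, h3, h4⟩

lemma memS {s l : V} (hs : s ∈ C) (hsL : s ∉ L) (hl : l ∈ L) (h : G.undir s l) :
    s ∈ SS := ⟨⟨l, hl, h⟩, hs, hsL⟩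

lemma bridge (compl : ∀ x ∈ G.nbr L ∩ (C \ L), ∀ y ∈ G.nbr L ∩ (C \ L), x ≠ y → G.undir x y) {s s' : V} (h1 : s ∈ SS) (h2 : s' ∈ SS) :
    Relation.ReflTransGen (G.splitGraph C L).undir s s' := by
  by_cases he : s = s'
  · subst he; exact Relation.ReflTransGen.refl
  · exact Relation.ReflTransGen.single
      (Hund_of_iff (compl s h1 s' h2 he) (iff_of_false h1.2.2 h2.2.2))

lemma bridgeZ (compl : ∀ x ∈ G.nbr L ∩ (C \ L), ∀ y ∈ G.nbr L ∩ (C \ L), x ≠ y → G.undir x y) {s s' : V} (h1 : s ∈ SS) (h2 : s' ∈ SS) (hz : s' ∉ Z) :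
    Relation.ReflTransGen (undZ (G.splitGraph C L) Z) s s' := by
  by_cases he : s = s'
  · subst he; exact Relation.ReflTransGen.refl
  · exact Relation.ReflTransGen.single
      ⟨Hund_of_iff (compl s h1 s' h2 he) (iff_of_false h1.2.2 h2.2.2), hz⟩

-- mono lemmas from H to G
lemma Hrtg_to_G {a b : V} (h : Relation.ReflTransGen (G.splitGraph C L).undir a b) :
    Relation.ReflTransGen G.undir a b :=
  Relation.ReflTransGen.mono (fun _ _ hu => hu.1) _ _ h

lemma HundZ_to_G {a b : V} (h : Relation.ReflTransGen (undZ (G.splitGraph C L) Z) a b) :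
    Relation.ReflTransGen (undZ G Z) a b :=
  Relation.ReflTransGen.mono (fun _ _ hu => ⟨hu.1.1, hu.2⟩) _ _ h

lemma HNC_to_G {a b : V} (h : NCp (G.splitGraph C L) Z a b) : NCp G Z a b :=
  ⟨h.1, HundZ_to_G h.2⟩

lemma HCC_to_G {a b : V} (h : CCp (G.splitGraph C L) Z a b) : CCp G Z a b := by
  obtain ⟨z, hz, h1, h2⟩ := h
  exact ⟨z, hz, Hrtg_to_G h1, Hrtg_to_G h2⟩

end Split

section DirA

variable {G : HybridGraph V} {C L Z : Set V} {x₀ : V}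

local notation "SS" => G.nbr L ∩ (C \ L)
local notation "HH" => G.splitGraph C L

/-- the simulation invariant: the `G`-chain shadows the `H`-chain -/
def ModeA (G : HybridGraph V) (C L Z : Set V) (x : V) (w : V × Bool) : Prop :=
  ∃ q : V × Bool, Relation.ReflTransGen (AStep G Z) (x, false) q ∧
    ( (q = w ∧ (w.2 = true → w.1 ∈ L → ∀ s ∈ G.nbr L ∩ (C \ L),
          Relation.ReflTransGen (AStep G Z) (x, false) (s, true)))
    ∨ (w.2 = true ∧ w.1 ∈ L ∧ ∃ s, s ∈ G.nbr L ∩ (C \ L) ∧ s ∉ Z ∧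
          Relation.ReflTransGen (srcZ G Z) q.1 s ∧ G.undir s w.1)
    ∨ (w.2 = false ∧ q.2 = false ∧ Relation.ReflTransGen (srcZ G Z) q.1 w.1)
    ∨ (w.2 = false ∧ q.2 = true ∧ Relation.ReflTransGen (srcZ G Z) q.1 w.1 ∧
          CCp G Z q.1 w.1) )

lemma bridgeSrc (compl : ∀ x ∈ G.nbr L ∩ (C \ L), ∀ y ∈ G.nbr L ∩ (C \ L), x ≠ y → G.undir x y)
    {s s' : V} (h1 : s ∈ SS) (h2 : s' ∈ SS) (hz : s ∉ Z) :
    Relation.ReflTransGen (srcZ G Z) s s' := by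
  by_cases he : s = s'
  · subst he; exact Relation.ReflTransGen.refl
  · exact Relation.ReflTransGen.single ⟨compl s h1 s' h2 he, hz⟩

lemma BA_step (hC : C = G.component x₀) (hLC : L ⊆ C)
    (compl : ∀ x ∈ G.nbr L ∩ (C \ L), ∀ y ∈ G.nbr L ∩ (C \ L), x ≠ y → G.undir x y)
    (paS : ∀ x ∈ G.Pa L, ∀ y ∈ G.nbr L ∩ (C \ L), G.dir x y)
    {x : V} {w w' : V × Bool}
    (hstep : AStep HH Z w w') (hM : ModeA G C L Z x w) : ModeA G C L Z x w' := by
  obtain ⟨q, hq, hmode⟩ := hM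
  obtain ⟨v, hcase⟩ := hstep
  obtain ⟨w'1, w'2⟩ := w'
  rcases hcase with ⟨hw'2, hNC, hdir⟩ | ⟨hw'2, hdir, hpay⟩
  · -- entering (w'1, true)
    simp only [] at hw'2 hdir hNC
    subst hw'2
    -- a G-level source-avoiding path from q.1 to v
    have hsrc : Relation.ReflTransGen (srcZ G Z) q.1 v := by
      rcases hmode with ⟨rfl, _⟩ | ⟨_, _, s, hsS, hsZ, hmid, hsw⟩ | ⟨_, _, hmid⟩ | ⟨_, _, hmid, _⟩
      · exact nc_toSrc (HNC_to_G hNC)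
      · exact Relation.ReflTransGen.trans hmid
          (Relation.ReflTransGen.head ⟨hsw, hsZ⟩ (nc_toSrc (HNC_to_G hNC)))
      · exact Relation.ReflTransGen.trans hmid (nc_toSrc (HNC_to_G hNC))
      · exact Relation.ReflTransGen.trans hmid (nc_toSrc (HNC_to_G hNC))
    have hvZ : v ∉ Z := nc_last hNC
    have hNCG : NCp G Z q.1 v := src_toNC hsrc hvZ
    rcases Hdir_cases hdir with hold | ⟨hvC, hvL, hw'L, hund⟩
    · -- old directed edge: genuine G-step
      have hstepG : AStep G Z q (w'1, true) := ⟨v, Or.inl ⟨rfl, hNCG, hold⟩⟩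
      refine ⟨(w'1, true), Relation.ReflTransGen.tail hq hstepG, Or.inl ⟨rfl, ?_⟩⟩
      intro _ hw'1L s hsS
      have hvPa : v ∈ G.Pa L := ⟨w'1, hw'1L, hold⟩
      exact Relation.ReflTransGen.tail hq ⟨v, Or.inl ⟨rfl, hNCG, paS v hvPa s hsS⟩⟩
    · -- new arrow: lag into bypass mode
      refine ⟨q, hq, Or.inr (Or.inl ⟨rfl, hw'L, v, memS hvC hvL hw'L hund, hvZ, hsrc, hund⟩)⟩
  · -- entering (w'1, false)
    simp only [] at hw'2 hdir
    subst hw'2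
    rcases Hdir_cases hdir with hold | ⟨hw'C, hw'nL, hvL, hund⟩
    · -- old directed edge: genuine G-step
      rcases hpay with ⟨hw2, hCC⟩ | ⟨hw2, hNC⟩
      · -- collider run in H
        rcases hmode with ⟨rfl, _⟩ | ⟨_, hwL, s, hsS, hsZ, hmid, hsw⟩ | ⟨hfw, _, _⟩ | ⟨hfw, _, _, _⟩
        · -- SYNC
          refine ⟨(w'1, false), Relation.ReflTransGen.tail hq
            ⟨v, Or.inr ⟨rfl, hold, Or.inl ⟨hw2, HCC_to_G hCC⟩⟩⟩, Or.inl ⟨rfl, ?_⟩⟩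
          intro hc; exact absurd hc (by simp)
        · -- bypass
          cases hq2 : q.2 with
          | true =>
            obtain ⟨z, hz, hr1, hr2⟩ := hCC
            have hCCG : CCp G Z q.1 v := by
              refine ⟨z, hz, ?_, Hrtg_to_G hr2⟩
              refine Relation.ReflTransGen.trans
                (Relation.ReflTransGen.mono (fun _ _ hu => hu.1) _ _ hmid) ?_
              exact Relation.ReflTransGen.head hsw (Hrtg_to_G hr1)
            refine ⟨(w'1, false), Relation.ReflTransGen.tail hq
              ⟨v, Or.inr ⟨rfl, hold, Or.inl ⟨hq2, hCCG⟩⟩⟩, Or.inl ⟨rfl, ?_⟩⟩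
            intro hc; exact absurd hc (by simp)
          | false =>
            -- bypass the collider block: exit at s instead
            have hvL' : v ∈ L := by
              obtain ⟨z, hz, hr1, hr2⟩ := hCC
              have h1 := Hrtg_L_iff hC hLC hr1
              have h2 := Hrtg_L_iff hC hLC hr2
              exact (h1.trans h2).mp hwL
            have hw'Pa : w'1 ∈ G.Pa L := ⟨v, hvL', hold⟩
            refine ⟨(w'1, false), Relation.ReflTransGen.tail hq
              ⟨s, Or.inr ⟨rfl, paS w'1 hw'Pa s hsS, Or.inr ⟨hq2, src_toNC hmid hsZ⟩⟩⟩,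
              Or.inl ⟨rfl, ?_⟩⟩
            intro hc; exact absurd hc (by simp)
        · exact absurd hw2 (by rw [hfw]; simp)
        · exact absurd hw2 (by rw [hfw]; simp)
      · -- non-collider run in H
        have hstepG : AStep G Z q (w'1, false) → ModeA G C L Z x (w'1, false) := by
          intro hstepG
          refine ⟨(w'1, false), Relation.ReflTransGen.tail hq hstepG, Or.inl ⟨rfl, ?_⟩⟩
          intro hc; exact absurd hc (by simp)
        rcases hmode with ⟨rfl, _⟩ | ⟨hft, _, _⟩ | ⟨_, hq2, hmid⟩ | ⟨_, hq2, hmid, hCCm⟩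
        · exact hstepG ⟨v, Or.inr ⟨rfl, hold, Or.inr ⟨hw2, HNC_to_G hNC⟩⟩⟩
        · exact absurd hw2 (by rw [hft]; simp)
        · refine hstepG ⟨v, Or.inr ⟨rfl, hold, Or.inr ⟨hq2, ?_⟩⟩⟩
          exact src_toNC (Relation.ReflTransGen.trans hmid (nc_toSrc (HNC_to_G hNC))) (nc_last hNC)
        · refine hstepG ⟨v, Or.inr ⟨rfl, hold, Or.inl ⟨hq2, ?_⟩⟩⟩
          obtain ⟨z, hz, hr1, hr2⟩ := hCCm
          exact ⟨z, hz, hr1, Relation.ReflTransGen.trans hr2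
            (Relation.ReflTransGen.mono (fun _ _ hu => hu.1.1) _ _ hNC.2)⟩
    · -- new arrow backwards: w'1 ∈ C\L, v ∈ L: lag
      have hw'S : w'1 ∈ SS := memS hw'C hw'nL hvL hund
      rcases hpay with ⟨hw2, hCC⟩ | ⟨hw2, hNC⟩
      · -- H made a collider run inside L
        have hwL : w.1 ∈ L := by
          obtain ⟨z, hz, hr1, hr2⟩ := hCC
          exact ((Hrtg_L_iff hC hLC hr1).trans (Hrtg_L_iff hC hLC hr2)).mpr hvL
        rcases hmode with ⟨heq, hcomp⟩ | ⟨_, _, s, hsS, hsZ, hmid, hsw⟩ | ⟨hfw, _, _⟩ | ⟨hfw, _, _, _⟩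
        · -- SYNC: use the companion reach to sit at (w'1, true)
          subst heq
          have hreach := hcomp hw2 hwL w'1 hw'S
          refine ⟨(w'1, true), hreach, Or.inr (Or.inr (Or.inr ⟨rfl, rfl, Relation.ReflTransGen.refl, ?_⟩))⟩
          obtain ⟨z, hz, hr1, hr2⟩ := hCC
          refine ⟨z, hz, ?_, ?_⟩
          · exact Relation.ReflTransGen.head hund (rtg_rev G.undir_symm (Hrtg_to_G hr2))
          · exact Relation.ReflTransGen.tail (Hrtg_to_G hr2) (G.undir_symm _ _ hund)
        · -- bypass mode
          cases hq2 : q.2 with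
          | true =>
            refine ⟨q, hq, Or.inr (Or.inr (Or.inr ⟨rfl, hq2, ?_, ?_⟩))⟩
            · exact Relation.ReflTransGen.trans hmid (bridgeSrc compl hsS hw'S hsZ)
            · obtain ⟨z, hz, hr1, hr2⟩ := hCC
              refine ⟨z, hz, ?_, ?_⟩
              · refine Relation.ReflTransGen.trans
                  (Relation.ReflTransGen.mono (fun _ _ hu => hu.1) _ _ hmid) ?_
                exact Relation.ReflTransGen.head hsw (Hrtg_to_G hr1)
              · exact Relation.ReflTransGen.tail (Hrtg_to_G hr2) (G.undir_symm _ _ hund)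
          | false =>
            refine ⟨q, hq, Or.inr (Or.inr (Or.inl ⟨rfl, hq2, ?_⟩))⟩
            exact Relation.ReflTransGen.trans hmid (bridgeSrc compl hsS hw'S hsZ)
        · exact absurd hw2 (by rw [hfw]; simp)
        · exact absurd hw2 (by rw [hfw]; simp)
      · -- H made a non-collider run
        have hsrcv : Relation.ReflTransGen (srcZ G Z) w.1 w'1 :=
          Relation.ReflTransGen.tail (nc_toSrc (HNC_to_G hNC))
            ⟨G.undir_symm _ _ hund, nc_last hNC⟩
        rcases hmode with ⟨rfl, _⟩ | ⟨hft, _, _⟩ | ⟨_, hq2, hmid⟩ | ⟨_, hq2, hmid, hCCm⟩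
        · exact ⟨q, hq, Or.inr (Or.inr (Or.inl ⟨rfl, hw2, hsrcv⟩))⟩
        · exact absurd hw2 (by rw [hft]; simp)
        · exact ⟨q, hq, Or.inr (Or.inr (Or.inl ⟨rfl, hq2,
            Relation.ReflTransGen.trans hmid hsrcv⟩))⟩
        · refine ⟨q, hq, Or.inr (Or.inr (Or.inr ⟨rfl, hq2,
            Relation.ReflTransGen.trans hmid hsrcv, ?_⟩))⟩
          obtain ⟨z, hz, hr1, hr2⟩ := hCCm
          refine ⟨z, hz, hr1, ?_⟩
          refine Relation.ReflTransGen.trans hr2 ?_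
          exact Relation.ReflTransGen.trans
            (Relation.ReflTransGen.mono (fun _ _ hu => hu.1.1) _ _ hNC.2)
            (Relation.ReflTransGen.single (G.undir_symm _ _ hund))

lemma BA_accept {x y : V} {w : V × Bool} (hM : ModeA G C L Z x w)
    (hNC : NCp HH Z w.1 y) :
    ∃ q : V × Bool, Relation.ReflTransGen (AStep G Z) (x, false) q ∧ NCp G Z q.1 y := by
  obtain ⟨q, hq, hmode⟩ := hM
  rcases hmode with ⟨rfl, _⟩ | ⟨_, _, s, hsS, hsZ, hmid, hsw⟩ | ⟨_, _, hmid⟩ | ⟨_, _, hmid, _⟩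
  · exact ⟨q, hq, HNC_to_G hNC⟩
  · refine ⟨q, hq, src_toNC ?_ (nc_last hNC)⟩
    exact Relation.ReflTransGen.trans hmid
      (Relation.ReflTransGen.head ⟨hsw, hsZ⟩ (nc_toSrc (HNC_to_G hNC)))
  · exact ⟨q, hq, src_toNC (Relation.ReflTransGen.trans hmid (nc_toSrc (HNC_to_G hNC))) (nc_last hNC)⟩
  · exact ⟨q, hq, src_toNC (Relation.ReflTransGen.trans hmid (nc_toSrc (HNC_to_G hNC))) (nc_last hNC)⟩

lemma BA (hC : C = G.component x₀) (hLC : L ⊆ C)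
    (compl : ∀ x ∈ G.nbr L ∩ (C \ L), ∀ y ∈ G.nbr L ∩ (C \ L), x ≠ y → G.undir x y)
    (paS : ∀ x ∈ G.Pa L, ∀ y ∈ G.nbr L ∩ (C \ L), G.dir x y)
    {X Y : Set V} (h : ActiveP HH Z X Y) : ActiveP G Z X Y := by
  obtain ⟨x, hx, p, hsteps, y, hy, hNC⟩ := h
  have hM : ModeA G C L Z x p := by
    clear hNC hy
    induction hsteps with
    | refl =>
      refine ⟨(x, false), Relation.ReflTransGen.refl, Or.inl ⟨rfl, ?_⟩⟩
      intro hc; exact absurd hc (by simp)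
    | tail _ hstep ih => exact BA_step hC hLC compl paS hstep ih
  obtain ⟨q, hq, hNCG⟩ := BA_accept hM hNC
  exact ⟨x, hx, q, hq, y, hy, hNCG⟩

end DirA

section DirB

variable {G : HybridGraph V} {C L Z : Set V} {x₀ : V}

local notation "SS" => G.nbr L ∩ (C \ L)
local notation "HH" => G.splitGraph C L

/-- invariant carried along the `G`-chain: `H` keeps up, and after a head entry
into `L` it can also sit at any split source -/
def InvB (G : HybridGraph V) (C L Z : Set V) (x : V) (w : V × Bool) : Prop :=
  Relation.ReflTransGen (AStep (G.splitGraph C L) Z) (x, false) w ∧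
  (w.2 = true → w.1 ∈ L → ∀ s ∈ G.nbr L ∩ (C \ L),
    Relation.ReflTransGen (AStep (G.splitGraph C L) Z) (x, false) (s, true))

/-- walking state while translating a `Z`-free `G`-run into `H` -/
def QS (G : HybridGraph V) (C L Z : Set V) (x : V) (ψ : ℕ → V) (p₀ : V × Bool) (i : ℕ) : Prop :=
  ∃ p : V × Bool, Relation.ReflTransGen (AStep (G.splitGraph C L) Z) (x, false) p ∧
    (p = p₀ ∨ p.2 = false) ∧
    ( (ψ i ∉ L ∧ NCp (G.splitGraph C L) Z p.1 (ψ i))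
    ∨ (ψ i ∈ L ∧ p.2 = false ∧ NCp (G.splitGraph C L) Z p.1 (ψ i))
    ∨ (ψ i ∈ L ∧ ∃ s l, NCp (G.splitGraph C L) Z p.1 s ∧ s ∈ G.nbr L ∩ (C \ L) ∧
        (G.splitGraph C L).dir s l ∧ l ∉ Z ∧
        Relation.ReflTransGen (undZ (G.splitGraph C L) Z) l (ψ i)) )

/-- plain (no `Z` information) walking state -/
def QP (G : HybridGraph V) (C L : Set V) (u₀ : V) (ψ : ℕ → V) (i : ℕ) : Prop :=
  (ψ i ∉ L ∧ Relation.ReflTransGen (G.splitGraph C L).undir u₀ (ψ i))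
  ∨ (ψ i ∈ L ∧ ∃ s, s ∈ G.nbr L ∩ (C \ L) ∧ Relation.ReflTransGen (G.splitGraph C L).undir u₀ s)

/-- `Z`-free walking state anchored at a node -/
def QN (G : HybridGraph V) (C L Z : Set V) (u₀ : V) (ψ : ℕ → V) (i : ℕ) : Prop :=
  (ψ i ∉ L ∧ Relation.ReflTransGen (undZ (G.splitGraph C L) Z) u₀ (ψ i))
  ∨ (ψ i ∈ L ∧ ∃ s, s ∈ G.nbr L ∩ (C \ L) ∧ s ∉ Z ∧
      Relation.ReflTransGen (undZ (G.splitGraph C L) Z) u₀ s)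

lemma WQP (hC : C = G.component x₀) (hLC : L ⊆ C) (compl : ∀ x ∈ G.nbr L ∩ (C \ L), ∀ y ∈ G.nbr L ∩ (C \ L), x ≠ y → G.undir x y)
    {m : ℕ} {ψ : ℕ → V} (hψ : ∀ i, i < m → G.undir (ψ i) (ψ (i+1))) (u₀ : V) :
    ∀ a i, a ≤ i → i ≤ m → QP G C L u₀ ψ a → QP G C L u₀ ψ i := by
  intro a i hai him hQ
  induction i, hai using Nat.le_induction with
  | base => exact hQ
  | succ i hai ih =>
    have hQi := ih (by omega)
    have hedge := hψ i (by omega)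
    by_cases hL1 : ψ (i+1) ∈ L
    · rcases hQi with ⟨hiL, hr⟩ | ⟨hiL, s, hsS, hr⟩
      · exact Or.inr ⟨hL1, ψ i, memS (mem_C_of_und' hC hedge (hLC hL1)) hiL hL1 hedge, hr⟩
      · exact Or.inr ⟨hL1, s, hsS, hr⟩
    · rcases hQi with ⟨hiL, hr⟩ | ⟨hiL, s, hsS, hr⟩
      · exact Or.inl ⟨hL1, Relation.ReflTransGen.tail hr (Hund_of_iff hedge (iff_of_false hiL hL1))⟩
      · have hs'S : ψ (i+1) ∈ SS :=
          memS (mem_C_of_und hC hedge (hLC hiL)) hL1 hiL (G.undir_symm _ _ hedge)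
        exact Or.inl ⟨hL1, Relation.ReflTransGen.trans hr (bridge compl hsS hs'S)⟩

lemma WQN (hC : C = G.component x₀) (hLC : L ⊆ C) (compl : ∀ x ∈ G.nbr L ∩ (C \ L), ∀ y ∈ G.nbr L ∩ (C \ L), x ≠ y → G.undir x y)
    {m : ℕ} {ψ : ℕ → V} (hψ : ∀ i, i < m → G.undir (ψ i) (ψ (i+1)))
    (hz : ∀ i, i ≤ m → ψ i ∉ L → ψ i ∉ Z) (u₀ : V) :
    ∀ a i, a ≤ i → i ≤ m → QN G C L Z u₀ ψ a → QN G C L Z u₀ ψ i := by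
  intro a i hai him hQ
  induction i, hai using Nat.le_induction with
  | base => exact hQ
  | succ i hai ih =>
    have hQi := ih (by omega)
    have hedge := hψ i (by omega)
    by_cases hL1 : ψ (i+1) ∈ L
    · rcases hQi with ⟨hiL, hr⟩ | ⟨hiL, s, hsS, hsZ, hr⟩
      · exact Or.inr ⟨hL1, ψ i, memS (mem_C_of_und' hC hedge (hLC hL1)) hiL hL1 hedge,
          hz i (by omega) hiL, hr⟩
      · exact Or.inr ⟨hL1, s, hsS, hsZ, hr⟩
    · rcases hQi with ⟨hiL, hr⟩ | ⟨hiL, s, hsS, hsZ, hr⟩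
      · exact Or.inl ⟨hL1, Relation.ReflTransGen.tail hr
          ⟨Hund_of_iff hedge (iff_of_false hiL hL1), hz (i+1) (by omega) hL1⟩⟩
      · have hs'S : ψ (i+1) ∈ SS :=
          memS (mem_C_of_und hC hedge (hLC hiL)) hL1 hiL (G.undir_symm _ _ hedge)
        exact Or.inl ⟨hL1, Relation.ReflTransGen.trans hr
          (bridgeZ compl hsS hs'S (hz (i+1) (by omega) hL1))⟩

lemma WQS (hC : C = G.component x₀) (hLC : L ⊆ C) (compl : ∀ x ∈ G.nbr L ∩ (C \ L), ∀ y ∈ G.nbr L ∩ (C \ L), x ≠ y → G.undir x y)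
    {m : ℕ} {ψ : ℕ → V} (hψ : ∀ i, i < m → G.undir (ψ i) (ψ (i+1)))
    (hAZ : ∀ i, i ≤ m → ψ i ∉ Z) {x : V} {p₀ : V × Bool} :
    QS G C L Z x ψ p₀ 0 → ∀ i, i ≤ m → QS G C L Z x ψ p₀ i := by
  intro hQ0 i him
  induction i with
  | zero => exact hQ0
  | succ i ih =>
    have hQi := ih (by omega)
    have hedge := hψ i (by omega)
    obtain ⟨p, hp, hok, hmode⟩ := hQi
    by_cases hL1 : ψ (i+1) ∈ L
    · rcases hmode with ⟨hiL, hnc⟩ | ⟨hiL, hp2, hnc⟩ | ⟨hiL, s, l, hncs, hsS, hdsl, hlZ, hrl⟩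
      · -- crossing into L: start hovering
        refine ⟨p, hp, hok, Or.inr (Or.inr ⟨hL1, ψ i, ψ (i+1), hnc,
          memS (mem_C_of_und' hC hedge (hLC hL1)) hiL hL1 hedge, ?_, hAZ (i+1) (by omega),
          Relation.ReflTransGen.refl⟩)⟩
        exact Hdir_new (mem_C_of_und' hC hedge (hLC hL1)) hiL hL1 hedge
      · -- walking inside L
        refine ⟨p, hp, hok, Or.inr (Or.inl ⟨hL1, hp2, nc_append hnc
          (Relation.ReflTransGen.single ⟨Hund_of_iff hedge (iff_of_true hiL hL1),
            hAZ (i+1) (by omega)⟩)⟩)⟩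
      · -- hovering, extend the pending block path
        refine ⟨p, hp, hok, Or.inr (Or.inr ⟨hL1, s, l, hncs, hsS, hdsl, hlZ,
          Relation.ReflTransGen.tail hrl ⟨Hund_of_iff hedge (iff_of_true hiL hL1),
            hAZ (i+1) (by omega)⟩⟩)⟩
    · rcases hmode with ⟨hiL, hnc⟩ | ⟨hiL, hp2, hnc⟩ | ⟨hiL, s, l, hncs, hsS, hdsl, hlZ, hrl⟩
      · -- staying outside L
        refine ⟨p, hp, hok, Or.inl ⟨hL1, nc_append hnc (Relation.ReflTransGen.single
          ⟨Hund_of_iff hedge (iff_of_false hiL hL1), hAZ (i+1) (by omega)⟩)⟩⟩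
      · -- head exit out of L
        have hC1 : ψ (i+1) ∈ C := mem_C_of_und hC hedge (hLC hiL)
        have hstep : AStep HH Z p (ψ (i+1), false) :=
          ⟨ψ i, Or.inr ⟨rfl, Hdir_new hC1 hL1 hiL (G.undir_symm _ _ hedge), Or.inr ⟨hp2, hnc⟩⟩⟩
        refine ⟨(ψ (i+1), false), Relation.ReflTransGen.tail hp hstep, Or.inr rfl,
          Or.inl ⟨hL1, hAZ (i+1) (by omega), Relation.ReflTransGen.refl⟩⟩
      · -- bridging onwards from the hover source
        have hs'S : ψ (i+1) ∈ SS :=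
          memS (mem_C_of_und hC hedge (hLC hiL)) hL1 hiL (G.undir_symm _ _ hedge)
        refine ⟨p, hp, hok, Or.inl ⟨hL1, nc_append hncs
          (bridgeZ compl hsS hs'S (hAZ (i+1) (by omega)))⟩⟩

lemma WQS_exitTail (paS : ∀ x ∈ G.Pa L, ∀ y ∈ G.nbr L ∩ (C \ L), G.dir x y)
    {m : ℕ} {ψ : ℕ → V} {x : V} {p₀ : V × Bool} {w' : V}
    (hQ : QS G C L Z x ψ p₀ m) (hd : G.dir (ψ m) w') :
    Relation.ReflTransGen (AStep HH Z) (x, false) (w', true) ∧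
    (w' ∈ L → ∀ s ∈ SS, Relation.ReflTransGen (AStep HH Z) (x, false) (s, true)) := by
  obtain ⟨p, hp, hok, hmode⟩ := hQ
  rcases hmode with ⟨hiL, hnc⟩ | ⟨hiL, hp2, hnc⟩ | ⟨hiL, s, l, hncs, hsS, hdsl, hlZ, hrl⟩
  · refine ⟨Relation.ReflTransGen.tail hp ⟨ψ m, Or.inl ⟨rfl, hnc, Hdir_old hd⟩⟩, ?_⟩
    intro hw'L s hsS
    exact Relation.ReflTransGen.tail hp
      ⟨ψ m, Or.inl ⟨rfl, hnc, Hdir_old (paS (ψ m) ⟨w', hw'L, hd⟩ s hsS)⟩⟩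
  · refine ⟨Relation.ReflTransGen.tail hp ⟨ψ m, Or.inl ⟨rfl, hnc, Hdir_old hd⟩⟩, ?_⟩
    intro hw'L s hsS
    exact Relation.ReflTransGen.tail hp
      ⟨ψ m, Or.inl ⟨rfl, hnc, Hdir_old (paS (ψ m) ⟨w', hw'L, hd⟩ s hsS)⟩⟩
  · have hreach2 : Relation.ReflTransGen (AStep HH Z) (x, false) (l, true) :=
      Relation.ReflTransGen.tail hp ⟨s, Or.inl ⟨rfl, hncs, hdsl⟩⟩
    have hncl : NCp HH Z l (ψ m) := ⟨hlZ, hrl⟩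
    refine ⟨Relation.ReflTransGen.tail hreach2 ⟨ψ m, Or.inl ⟨rfl, hncl, Hdir_old hd⟩⟩, ?_⟩
    intro hw'L s' hs'S
    exact Relation.ReflTransGen.tail hreach2
      ⟨ψ m, Or.inl ⟨rfl, hncl, Hdir_old (paS (ψ m) ⟨w', hw'L, hd⟩ s' hs'S)⟩⟩

lemma WQS_exitHead (paS : ∀ x ∈ G.Pa L, ∀ y ∈ G.nbr L ∩ (C \ L), G.dir x y)
    {m : ℕ} {ψ : ℕ → V} {x : V} {p₀ : V × Bool} {w' : V}
    (hQ : QS G C L Z x ψ p₀ m) (hp₀2 : p₀.2 = false) (hd : G.dir w' (ψ m)) :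
    Relation.ReflTransGen (AStep HH Z) (x, false) (w', false) := by
  obtain ⟨p, hp, hok, hmode⟩ := hQ
  have hp2 : p.2 = false := by
    rcases hok with he | he
    · rw [he]; exact hp₀2
    · exact he
  rcases hmode with ⟨hiL, hnc⟩ | ⟨hiL, _, hnc⟩ | ⟨hiL, s, l, hncs, hsS, hdsl, hlZ, hrl⟩
  · exact Relation.ReflTransGen.tail hp ⟨ψ m, Or.inr ⟨rfl, Hdir_old hd, Or.inr ⟨hp2, hnc⟩⟩⟩
  · exact Relation.ReflTransGen.tail hp ⟨ψ m, Or.inr ⟨rfl, Hdir_old hd, Or.inr ⟨hp2, hnc⟩⟩⟩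
  · exact Relation.ReflTransGen.tail hp ⟨s, Or.inr ⟨rfl,
      Hdir_old (paS w' ⟨ψ m, hiL, hd⟩ s hsS), Or.inr ⟨hp2, hncs⟩⟩⟩

lemma WQS_exitAcc {m : ℕ} {ψ : ℕ → V} {x : V} {p₀ : V × Bool}
    (hQ : QS G C L Z x ψ p₀ m) :
    ∃ p' : V × Bool, Relation.ReflTransGen (AStep HH Z) (x, false) p' ∧
      NCp HH Z p'.1 (ψ m) := by
  obtain ⟨p, hp, hok, hmode⟩ := hQ
  rcases hmode with ⟨hiL, hnc⟩ | ⟨hiL, _, hnc⟩ | ⟨hiL, s, l, hncs, hsS, hdsl, hlZ, hrl⟩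
  · exact ⟨p, hp, hnc⟩
  · exact ⟨p, hp, hnc⟩
  · exact ⟨(l, true), Relation.ReflTransGen.tail hp ⟨s, Or.inl ⟨rfl, hncs, hdsl⟩⟩, hlZ, hrl⟩

lemma WNC_setup (hC : C = G.component x₀) (hLC : L ⊆ C)
    {x w : V} {h : Bool} {m : ℕ} {ψ : ℕ → V}
    (hreach : Relation.ReflTransGen (AStep HH Z) (x, false) (w, h))
    (hcomp : h = true → w ∈ L → ∀ s ∈ SS,
      Relation.ReflTransGen (AStep HH Z) (x, false) (s, true))
    (hψ0 : ψ 0 = w) (hψ : ∀ i, i < m → G.undir (ψ i) (ψ (i+1)))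
    (hAZ : ∀ i, i ≤ m → ψ i ∉ Z) :
    (∃ p₀, QS G C L Z x ψ p₀ 0 ∧ (h = false → p₀.2 = false)) ∨
    (h = true ∧ ∀ i, i ≤ m → ψ i ∈ L) := by
  by_cases h0 : ψ 0 ∈ L
  · cases h with
    | false =>
      refine Or.inl ⟨(w, false), ⟨(w, false), hreach, Or.inl rfl,
        Or.inr (Or.inl ⟨h0, rfl, ?_⟩)⟩, fun _ => rfl⟩
      rw [show ((w, false) : V × Bool).1 = w from rfl, ← hψ0]
      exact ⟨hAZ 0 (by omega), Relation.ReflTransGen.refl⟩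
    | true =>
      by_cases hex : ∃ k, k ≤ m ∧ ψ k ∉ L
      · -- the run leaves L: hover start at the first exit point
        set k₀ := Nat.find hex with hk₀
        obtain ⟨hk0m', hk0L'⟩ := Nat.find_spec hex
        have hk0m : k₀ ≤ m := hk0m'
        have hk0L : ψ k₀ ∉ L := hk0L'
        have hlt : ∀ t, t < k₀ → ψ t ∈ L := by
          intro t ht
          have := Nat.find_min hex ht
          push_neg at this
          exact this (by omega)
        have hk0pos : 0 < k₀ := by
          rcases Nat.eq_zero_or_pos k₀ with h' | h'
          · rw [h'] at hk0L; exact absurd h0 hk0L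
          · exact h'
        have he1 : k₀ - 1 + 1 = k₀ := by omega
        have hedge : G.undir (ψ (k₀ - 1)) (ψ k₀) := by
          have := hψ (k₀ - 1) (by omega)
          rwa [he1] at this
        have hprevL : ψ (k₀ - 1) ∈ L := hlt (k₀ - 1) (by omega)
        have hk0C : ψ k₀ ∈ C := mem_C_of_und hC hedge (hLC hprevL)
        have hk0S : ψ k₀ ∈ SS := memS hk0C hk0L hprevL (G.undir_symm _ _ hedge)
        have hreach0 : Relation.ReflTransGen (AStep HH Z) (x, false) (ψ k₀, true) :=
          hcomp rfl (hψ0 ▸ h0) (ψ k₀) hk0S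
        refine Or.inl ⟨(ψ k₀, true), ⟨(ψ k₀, true), hreach0, Or.inl rfl,
          Or.inr (Or.inr ⟨h0, ψ k₀, ψ (k₀ - 1), ⟨hAZ k₀ (by omega), Relation.ReflTransGen.refl⟩,
            hk0S, Hdir_new hk0C hk0L hprevL (G.undir_symm _ _ hedge), hAZ (k₀ - 1) (by omega),
            ?_⟩)⟩, fun hc => Bool.noConfusion hc⟩
        refine seg_rtg_rev (r := undZ HH Z) (ψ := ψ) (a := 0) (b := k₀ - 1) ?_ 0 (k₀ - 1)
          le_rfl (by omega) le_rfl
        intro t _ ht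
        exact ⟨Hund_of_iff (G.undir_symm _ _ (hψ t (by omega)))
          (iff_of_true (hlt (t+1) (by omega)) (hlt t (by omega))), hAZ t (by omega)⟩
      · push_neg at hex
        exact Or.inr ⟨rfl, fun i hi => hex i hi⟩
  · refine Or.inl ⟨(w, h), ⟨(w, h), hreach, Or.inl rfl, Or.inl ⟨h0, ?_⟩⟩, fun hf => hf ▸ rfl⟩
    rw [show ((w, h) : V × Bool).1 = w from rfl, ← hψ0]
    exact ⟨hAZ 0 (by omega), Relation.ReflTransGen.refl⟩

lemma inL_ncH {m : ℕ} {ψ : ℕ → V} (hψ : ∀ i, i < m → G.undir (ψ i) (ψ (i+1)))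
    (hAZ : ∀ i, i ≤ m → ψ i ∉ Z) (hall : ∀ i, i ≤ m → ψ i ∈ L) :
    NCp HH Z (ψ 0) (ψ m) := by
  refine ⟨hAZ 0 (by omega), ?_⟩
  refine seg_rtg (r := undZ HH Z) (ψ := ψ) (a := 0) (b := m) ?_ 0 m le_rfl (by omega) le_rfl
  intro t _ ht
  exact ⟨Hund_of_iff (hψ t ht) (iff_of_true (hall t (by omega)) (hall (t+1) (by omega))),
    hAZ (t+1) (by omega)⟩

lemma BB_NC_tail (hC : C = G.component x₀) (hLC : L ⊆ C)
    (compl : ∀ x ∈ G.nbr L ∩ (C \ L), ∀ y ∈ G.nbr L ∩ (C \ L), x ≠ y → G.undir x y)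
    (paS : ∀ x ∈ G.Pa L, ∀ y ∈ G.nbr L ∩ (C \ L), G.dir x y)
    {x w v w' : V} {h : Bool}
    (hreach : Relation.ReflTransGen (AStep HH Z) (x, false) (w, h))
    (hcomp : h = true → w ∈ L → ∀ s ∈ SS,
      Relation.ReflTransGen (AStep HH Z) (x, false) (s, true))
    (hNC : NCp G Z w v) (hd : G.dir v w') :
    Relation.ReflTransGen (AStep HH Z) (x, false) (w', true) ∧
    (w' ∈ L → ∀ s ∈ SS, Relation.ReflTransGen (AStep HH Z) (x, false) (s, true)) := by
  obtain ⟨m, ψ, hψ0, hψm, hst⟩ := exists_path hNC.2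
  have hψ : ∀ i, i < m → G.undir (ψ i) (ψ (i+1)) := fun i hi => (hst i hi).1
  have hAZ : ∀ i, i ≤ m → ψ i ∉ Z := pathAllZ (by rw [hψ0]; exact hNC.1) hst
  have hdm : G.dir (ψ m) w' := by rw [hψm]; exact hd
  rcases WNC_setup hC hLC hreach hcomp hψ0 hψ hAZ with ⟨p₀, hQ0, _⟩ | ⟨hh, hall⟩
  · exact WQS_exitTail paS (WQS hC hLC compl hψ hAZ hQ0 m le_rfl) hdm
  · subst hh
    have hncH : NCp HH Z w (ψ m) := by rw [← hψ0]; exact inL_ncH hψ hAZ hall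
    refine ⟨Relation.ReflTransGen.tail hreach ⟨ψ m, Or.inl ⟨rfl, hncH, Hdir_old hdm⟩⟩, ?_⟩
    intro hw'L s hsS
    exact Relation.ReflTransGen.tail hreach
      ⟨ψ m, Or.inl ⟨rfl, hncH, Hdir_old (paS (ψ m) ⟨w', hw'L, hdm⟩ s hsS)⟩⟩

lemma BB_NC_head (hC : C = G.component x₀) (hLC : L ⊆ C)
    (compl : ∀ x ∈ G.nbr L ∩ (C \ L), ∀ y ∈ G.nbr L ∩ (C \ L), x ≠ y → G.undir x y)
    (paS : ∀ x ∈ G.Pa L, ∀ y ∈ G.nbr L ∩ (C \ L), G.dir x y)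
    {x w v w' : V}
    (hreach : Relation.ReflTransGen (AStep HH Z) (x, false) (w, false))
    (hNC : NCp G Z w v) (hd : G.dir w' v) :
    Relation.ReflTransGen (AStep HH Z) (x, false) (w', false) := by
  obtain ⟨m, ψ, hψ0, hψm, hst⟩ := exists_path hNC.2
  have hψ : ∀ i, i < m → G.undir (ψ i) (ψ (i+1)) := fun i hi => (hst i hi).1
  have hAZ : ∀ i, i ≤ m → ψ i ∉ Z := pathAllZ (by rw [hψ0]; exact hNC.1) hst
  have hdm : G.dir w' (ψ m) := by rw [hψm]; exact hd
  rcases WNC_setup hC hLC hreach (fun hc => Bool.noConfusion hc) hψ0 hψ hAZ with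
    ⟨p₀, hQ0, hp₀2⟩ | ⟨hh, _⟩
  · exact WQS_exitHead paS (WQS hC hLC compl hψ hAZ hQ0 m le_rfl) (hp₀2 rfl) hdm
  · exact Bool.noConfusion hh

lemma BB_NC_acc (hC : C = G.component x₀) (hLC : L ⊆ C)
    (compl : ∀ x ∈ G.nbr L ∩ (C \ L), ∀ y ∈ G.nbr L ∩ (C \ L), x ≠ y → G.undir x y)
    {x w v : V} {h : Bool}
    (hreach : Relation.ReflTransGen (AStep HH Z) (x, false) (w, h))
    (hcomp : h = true → w ∈ L → ∀ s ∈ SS,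
      Relation.ReflTransGen (AStep HH Z) (x, false) (s, true))
    (hNC : NCp G Z w v) :
    ∃ p' : V × Bool, Relation.ReflTransGen (AStep HH Z) (x, false) p' ∧ NCp HH Z p'.1 v := by
  obtain ⟨m, ψ, hψ0, hψm, hst⟩ := exists_path hNC.2
  have hψ : ∀ i, i < m → G.undir (ψ i) (ψ (i+1)) := fun i hi => (hst i hi).1
  have hAZ : ∀ i, i ≤ m → ψ i ∉ Z := pathAllZ (by rw [hψ0]; exact hNC.1) hst
  rcases WNC_setup hC hLC hreach hcomp hψ0 hψ hAZ with ⟨p₀, hQ0, _⟩ | ⟨hh, hall⟩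
  · obtain ⟨p', h1, h2⟩ := WQS_exitAcc (WQS hC hLC compl hψ hAZ hQ0 m le_rfl)
    exact ⟨p', h1, by rw [← hψm]; exact h2⟩
  · subst hh
    refine ⟨(w, true), hreach, ?_⟩
    rw [show ((w, true) : V × Bool).1 = w from rfl, ← hψm, ← hψ0]
    exact inL_ncH hψ hAZ hall

lemma firstExit (hC : C = G.component x₀) (hLC : L ⊆ C) {m : ℕ} {ψ : ℕ → V}
    (hψ : ∀ i, i < m → G.undir (ψ i) (ψ (i+1))) (h0 : ψ 0 ∈ L)
    (hex : ∃ k, k ≤ m ∧ ψ k ∉ L) :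
    ∃ k₀, 0 < k₀ ∧ k₀ ≤ m ∧ ψ k₀ ∉ L ∧ (∀ t, t < k₀ → ψ t ∈ L) ∧ ψ k₀ ∈ SS := by
  set k₀ := Nat.find hex with hk₀
  obtain ⟨hk0m', hk0L'⟩ := Nat.find_spec hex
  have hk0m : k₀ ≤ m := hk0m'
  have hk0L : ψ k₀ ∉ L := hk0L'
  have hlt : ∀ t, t < k₀ → ψ t ∈ L := by
    intro t ht
    have := Nat.find_min hex ht
    push_neg at this
    exact this (by omega)
  have hk0pos : 0 < k₀ := by
    rcases Nat.eq_zero_or_pos k₀ with h' | h'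
    · rw [h'] at hk0L; exact absurd h0 hk0L
    · exact h'
  have he1 : k₀ - 1 + 1 = k₀ := by omega
  have hedge : G.undir (ψ (k₀ - 1)) (ψ k₀) := by
    have := hψ (k₀ - 1) (by omega)
    rwa [he1] at this
  have hprevL : ψ (k₀ - 1) ∈ L := hlt (k₀ - 1) (by omega)
  exact ⟨k₀, hk0pos, hk0m, hk0L, hlt,
    memS (mem_C_of_und hC hedge (hLC hprevL)) hk0L hprevL (G.undir_symm _ _ hedge)⟩

lemma BB_CC (hC : C = G.component x₀) (hLC : L ⊆ C)
    (compl : ∀ x ∈ G.nbr L ∩ (C \ L), ∀ y ∈ G.nbr L ∩ (C \ L), x ≠ y → G.undir x y)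
    (paS : ∀ x ∈ G.Pa L, ∀ y ∈ G.nbr L ∩ (C \ L), G.dir x y)
    {x w v w' : V}
    (hreach : Relation.ReflTransGen (AStep HH Z) (x, false) (w, true))
    (hcomp : w ∈ L → ∀ s ∈ SS, Relation.ReflTransGen (AStep HH Z) (x, false) (s, true))
    (hCC : CCp G Z w v) (hd : G.dir w' v) :
    Relation.ReflTransGen (AStep HH Z) (x, false) (w', false) := by
  obtain ⟨z, hzZ, hr1, hr2⟩ := hCC
  obtain ⟨m₁, ψ₁, h10, h1m, h1s⟩ := exists_path hr1
  obtain ⟨m₂, ψ₂, h20, h2m, h2s⟩ := exists_path hr2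
  obtain ⟨ψ, hc0, hcm, hψ, hseam⟩ := path_concat h1s h2s (by rw [h1m, h20])
  set m := m₁ + m₂ with hm
  set j := m₁ with hj
  have hψ0 : ψ 0 = w := by rw [hc0, h10]
  have hjm : j ≤ m := by omega
  have hjZ : ψ j ∈ Z := by rw [hseam, h20]; exact hzZ
  have hdm : G.dir w' (ψ m) := by rw [hcm, h2m]; exact hd
  by_cases hcr : ∀ i, i < m → (ψ i ∈ L ↔ ψ (i+1) ∈ L)
  · -- no boundary crossing: the run exists verbatim in H
    have hund : ∀ t, (0:ℕ) ≤ t → t < m → (G.splitGraph C L).undir (ψ t) (ψ (t+1)) :=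
      fun t _ ht => Hund_of_iff (hψ t ht) (hcr t ht)
    have hCCH : CCp HH Z w (ψ m) := by
      refine ⟨ψ j, hjZ, ?_, ?_⟩
      · rw [← hψ0]
        exact seg_rtg hund 0 j (by omega) (by omega) (by omega)
      · exact seg_rtg hund j m (by omega) hjm (by omega)
    exact Relation.ReflTransGen.tail hreach
      ⟨ψ m, Or.inr ⟨rfl, Hdir_old hdm, Or.inl ⟨rfl, hCCH⟩⟩⟩
  · by_cases hβ1 : ∃ i, i ≤ m ∧ ψ i ∉ L ∧ ψ i ∈ Z
    · -- a Z-node outside L: collide in C \ L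
      obtain ⟨i', him, hiL, hiZ⟩ := hβ1
      have hstart : ∃ u₀, Relation.ReflTransGen (AStep HH Z) (x, false) (u₀, true) ∧
          QP G C L u₀ ψ 0 := by
        by_cases h0 : ψ 0 ∈ L
        · obtain ⟨k₀, _, _, hk0L, _, hk0S⟩ := firstExit hC hLC hψ h0 ⟨i', him, hiL⟩
          exact ⟨ψ k₀, hcomp (hψ0 ▸ h0) (ψ k₀) hk0S,
            Or.inr ⟨h0, ψ k₀, hk0S, Relation.ReflTransGen.refl⟩⟩
        · exact ⟨w, hreach, Or.inl ⟨h0, by rw [hψ0]⟩⟩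
      obtain ⟨u₀, hp₀, hQP0⟩ := hstart
      have hQPi : QP G C L u₀ ψ i' := WQP hC hLC compl hψ u₀ 0 i' (by omega) him hQP0
      rcases hQPi with ⟨_, hra⟩ | ⟨hc, _⟩
      · have hQPm : QP G C L (ψ i') ψ m :=
          WQP hC hLC compl hψ (ψ i') i' m (by omega) le_rfl
            (Or.inl ⟨hiL, Relation.ReflTransGen.refl⟩)
        rcases hQPm with ⟨_, hrb⟩ | ⟨hmL, s_k, hskS, hrb⟩
        · exact Relation.ReflTransGen.tail hp₀
            ⟨ψ m, Or.inr ⟨rfl, Hdir_old hdm, Or.inl ⟨rfl, ψ i', hiZ, hra, hrb⟩⟩⟩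
        · exact Relation.ReflTransGen.tail hp₀
            ⟨s_k, Or.inr ⟨rfl, Hdir_old (paS w' ⟨ψ m, hmL, hdm⟩ s_k hskS),
              Or.inl ⟨rfl, ψ i', hiZ, hra, hrb⟩⟩⟩
      · exact absurd hc hiL
    · -- every Z-node of the run lies in L: collide inside the block of the witness
      push_neg at hβ1
      have hz : ∀ i, i ≤ m → ψ i ∉ L → ψ i ∉ Z := hβ1
      have hjL : ψ j ∈ L := by
        by_contra hc
        exact hz j hjm hc hjZ
      -- left boundary of the block containing j
      have hleft : ∃ aa, aa ≤ j ∧ (∀ t, aa ≤ t → t ≤ j → ψ t ∈ L) ∧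
          Relation.ReflTransGen (AStep HH Z) (x, false) (ψ aa, true) := by
        by_cases hA : ∃ t, t ≤ j ∧ ψ t ∉ L
        · obtain ⟨t, htj, htL⟩ := hA
          set a := Nat.findGreatest (fun t => ψ t ∉ L) j with ha
          have haL : ψ a ∉ L := by
            rw [ha]
            exact Nat.findGreatest_spec (P := fun t => ψ t ∉ L) htj htL
          have haj : a ≤ j := Nat.findGreatest_le j
          have hgt : ∀ t', a < t' → t' ≤ j → ψ t' ∈ L := by
            intro t' h1 h2
            by_contra hc
            exact Nat.findGreatest_is_greatest h1 h2 hc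
          have halt : a < j := lt_of_le_of_ne haj (fun he => haL (he ▸ hjL))
          -- phase 1: reach ψ a avoiding Z outside L
          have hstart : ∃ u₀, u₀ ∉ Z ∧
              Relation.ReflTransGen (AStep HH Z) (x, false) (u₀, true) ∧
              QN G C L Z u₀ ψ 0 := by
            by_cases h0 : ψ 0 ∈ L
            · obtain ⟨k₀, _, hk0m, hk0L, _, hk0S⟩ :=
                firstExit hC hLC hψ h0 ⟨a, by omega, haL⟩
              exact ⟨ψ k₀, hz k₀ hk0m hk0L, hcomp (hψ0 ▸ h0) (ψ k₀) hk0S,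
                Or.inr ⟨h0, ψ k₀, hk0S, hz k₀ hk0m hk0L, Relation.ReflTransGen.refl⟩⟩
            · exact ⟨w, by rw [← hψ0]; exact hz 0 (by omega) h0,
                hreach, Or.inl ⟨h0, by rw [hψ0]⟩⟩
          obtain ⟨u₀, hu₀Z, hp₁, hQN0⟩ := hstart
          have hQNa : QN G C L Z u₀ ψ a := WQN hC hLC compl hψ hz u₀ 0 a (by omega)
            (by omega) hQN0
          rcases hQNa with ⟨_, hra⟩ | ⟨hc, _⟩
          · have hstep2 : AStep HH Z (u₀, true) (ψ (a+1), true) := by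
              refine ⟨ψ a, Or.inl ⟨rfl, ⟨hu₀Z, hra⟩, ?_⟩⟩
              refine Hdir_new (mem_C_of_und' hC (hψ a (by omega)) (hLC ?_)) haL ?_
                (hψ a (by omega))
              · exact hgt (a+1) (by omega) (by omega)
              · exact hgt (a+1) (by omega) (by omega)
            exact ⟨a + 1, by omega, fun t h1 h2 => hgt t (by omega) h2,
              Relation.ReflTransGen.tail hp₁ hstep2⟩
          · exact absurd hc haL
        · push_neg at hA
          exact ⟨0, by omega, fun t _ h2 => hA t h2, by rw [hψ0]; exact hreach⟩
      obtain ⟨aa, haaj, hblkL, hreach2⟩ := hleft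
      -- right boundary
      by_cases hB : ∃ t, j ≤ t ∧ t ≤ m ∧ ψ t ∉ L
      · set b := Nat.find hB with hb
        obtain ⟨hjb', hbm', hbL'⟩ := Nat.find_spec hB
        have hjb : j ≤ b := hjb'
        have hbm : b ≤ m := hbm'
        have hbL : ψ b ∉ L := hbL'
        have hltb : ∀ t, j ≤ t → t < b → ψ t ∈ L := by
          intro t h1 h2
          have := Nat.find_min hB h2
          push_neg at this
          by_contra hc
          exact hc (this h1 (by omega))
        have hjb2 : j < b := lt_of_le_of_ne hjb (fun he => hbL (he ▸ hjL))
        have hblk : ∀ t, aa ≤ t → t ≤ b - 1 → ψ t ∈ L := by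
          intro t h1 h2
          rcases le_or_gt t j with h' | h'
          · exact hblkL t h1 h'
          · exact hltb t (by omega) (by omega)
        have hundblk : ∀ t, aa ≤ t → t < b - 1 → (G.splitGraph C L).undir (ψ t) (ψ (t+1)) :=
          fun t h1 h2 => Hund_of_iff (hψ t (by omega))
            (iff_of_true (hblk t h1 (by omega)) (hblk (t+1) (by omega) (by omega)))
        have hCCblk : CCp HH Z (ψ aa) (ψ (b-1)) :=
          ⟨ψ j, hjZ, seg_rtg hundblk aa j le_rfl haaj (by omega),
            seg_rtg hundblk j (b-1) haaj (by omega) le_rfl⟩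
        have he1 : b - 1 + 1 = b := by omega
        have hedgeb : G.undir (ψ (b-1)) (ψ b) := by
          have := hψ (b-1) (by omega)
          rwa [he1] at this
        have hstep3 : AStep HH Z (ψ aa, true) (ψ b, false) := by
          refine ⟨ψ (b-1), Or.inr ⟨rfl, ?_, Or.inl ⟨rfl, hCCblk⟩⟩⟩
          exact Hdir_new (mem_C_of_und hC hedgeb (hLC (hblk (b-1) (by omega) le_rfl))) hbL
            (hblk (b-1) (by omega) le_rfl) (G.undir_symm _ _ hedgeb)
        have hreach3 : Relation.ReflTransGen (AStep HH Z) (x, false) (ψ b, false) :=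
          Relation.ReflTransGen.tail hreach2 hstep3
        have hQNm : QN G C L Z (ψ b) ψ m := WQN hC hLC compl hψ hz (ψ b) b m hbm le_rfl
          (Or.inl ⟨hbL, Relation.ReflTransGen.refl⟩)
        rcases hQNm with ⟨hmL, hr3⟩ | ⟨hmL, s_k, hskS, hskZ, hr3⟩
        · exact Relation.ReflTransGen.tail hreach3
            ⟨ψ m, Or.inr ⟨rfl, Hdir_old hdm, Or.inr ⟨rfl, hz b hbm hbL, hr3⟩⟩⟩
        · exact Relation.ReflTransGen.tail hreach3
            ⟨s_k, Or.inr ⟨rfl, Hdir_old (paS w' ⟨ψ m, hmL, hdm⟩ s_k hskS),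
              Or.inr ⟨rfl, hz b hbm hbL, hr3⟩⟩⟩
      · push_neg at hB
        have hblk : ∀ t, aa ≤ t → t ≤ m → ψ t ∈ L := by
          intro t h1 h2
          rcases le_or_gt t j with h' | h'
          · exact hblkL t h1 h'
          · exact hB t (by omega) h2
        have hundblk : ∀ t, aa ≤ t → t < m → (G.splitGraph C L).undir (ψ t) (ψ (t+1)) :=
          fun t h1 h2 => Hund_of_iff (hψ t h2)
            (iff_of_true (hblk t h1 (by omega)) (hblk (t+1) (by omega) (by omega)))
        have hCCblk : CCp HH Z (ψ aa) (ψ m) :=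
          ⟨ψ j, hjZ, seg_rtg hundblk aa j le_rfl haaj hjm,
            seg_rtg hundblk j m haaj hjm le_rfl⟩
        exact Relation.ReflTransGen.tail hreach2
          ⟨ψ m, Or.inr ⟨rfl, Hdir_old hdm, Or.inl ⟨rfl, hCCblk⟩⟩⟩

lemma BB_step (hC : C = G.component x₀) (hLC : L ⊆ C)
    (compl : ∀ x ∈ G.nbr L ∩ (C \ L), ∀ y ∈ G.nbr L ∩ (C \ L), x ≠ y → G.undir x y)
    (paS : ∀ x ∈ G.Pa L, ∀ y ∈ G.nbr L ∩ (C \ L), G.dir x y)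
    {x : V} {w w' : V × Bool}
    (hstep : AStep G Z w w') (hI : InvB G C L Z x w) : InvB G C L Z x w' := by
  obtain ⟨hreach, hcomp⟩ := hI
  obtain ⟨w1, w2⟩ := w
  obtain ⟨v, hcase⟩ := hstep
  obtain ⟨w'1, w'2⟩ := w'
  rcases hcase with ⟨hw'2, hNC, hdir⟩ | ⟨hw'2, hdir, hpay⟩
  · simp only [] at hw'2 hNC hdir
    subst hw'2
    obtain ⟨h1, h2⟩ := BB_NC_tail hC hLC compl paS hreach (fun ht => hcomp ht) hNC hdir
    exact ⟨h1, fun _ => h2⟩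
  · simp only [] at hw'2 hdir hpay
    subst hw'2
    rcases hpay with ⟨hw2, hCC⟩ | ⟨hw2, hNC⟩
    · have hw2' : w2 = true := hw2
      subst hw2'
      refine ⟨BB_CC hC hLC compl paS hreach (fun hl => hcomp rfl hl) hCC hdir, ?_⟩
      intro hc; exact absurd hc (by simp)
    · have hw2' : w2 = false := hw2
      subst hw2'
      refine ⟨BB_NC_head hC hLC compl paS hreach hNC hdir, ?_⟩
      intro hc; exact absurd hc (by simp)

lemma BB (hC : C = G.component x₀) (hLC : L ⊆ C)
    (compl : ∀ x ∈ G.nbr L ∩ (C \ L), ∀ y ∈ G.nbr L ∩ (C \ L), x ≠ y → G.undir x y)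
    (paS : ∀ x ∈ G.Pa L, ∀ y ∈ G.nbr L ∩ (C \ L), G.dir x y)
    {X Y : Set V} (h : ActiveP G Z X Y) : ActiveP HH Z X Y := by
  obtain ⟨x, hx, p, hsteps, y, hy, hNC⟩ := h
  have hI : InvB G C L Z x p := by
    clear hNC hy
    induction hsteps with
    | refl =>
      refine ⟨Relation.ReflTransGen.refl, ?_⟩
      intro hc; exact absurd hc (by simp)
    | tail _ hstep ih => exact BB_step hC hLC compl paS hstep ih
  obtain ⟨hreach, hcomp⟩ := hI
  obtain ⟨p1, p2⟩ := p
  obtain ⟨p', h1, h2⟩ := BB_NC_acc hC hLC compl hreach (fun ht => hcomp ht) hNC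
  exact ⟨x, hx, p', h1, y, hy, h2⟩

end DirB

end FSplit

/-- a feasible split preserves the induced independence model. -/
theorem feasibleSplit_sep_iff [Fintype V] (G H : HybridGraph V)
    (hG : G.IsChainGraph) (hsplit : IsFeasibleSplit G H) :
    ∀ X Y Z : Set V, Disjoint X Y → Disjoint X Z → Disjoint Y Z →
      (G.Sep X Y Z ↔ H.Sep X Y Z) := by
  obtain ⟨C, L, ⟨x₀, hC⟩, hLC, _, _, _, _, compl, paS, hHeq⟩ := hsplit
  subst hHeq
  intro X Y Z _ _ _
  constructor
  · intro hsep
    rintro ⟨ρ, h1, h2, h3⟩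
    have hA : FSplit.ActiveP (G.splitGraph C L) Z X Y := FSplit.route_to_active ρ h1 h2 h3
    have hG' : FSplit.ActiveP G Z X Y := FSplit.BA hC hLC compl paS hA
    obtain ⟨ρ', hρ1, hρ2, hρ3⟩ := FSplit.active_to_route hG'
    exact hsep ⟨ρ', hρ1, hρ2, hρ3⟩
  · intro hsep
    rintro ⟨ρ, h1, h2, h3⟩
    have hA : FSplit.ActiveP G Z X Y := FSplit.route_to_active ρ h1 h2 h3
    have hH' : FSplit.ActiveP (G.splitGraph C L) Z X Y := FSplit.BB hC hLC compl paS hA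
    obtain ⟨ρ', hρ1, hρ2, hρ3⟩ := FSplit.active_to_route hH'
    exact hsep ⟨ρ', hρ1, hρ2, hρ3⟩
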